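/- arXiv:1703.01668 — 8 statements merged into one kernel-verified Lean document; each statement's English description precedes it below -/
import Mathlib

section
/- For every natural number n ≥ 1 and real parameters y > 0 and λ, the functions J_n(y,λ) = ∫₀¹ t^{y²-λ} e^{(1-t)y²} (1-t)^n (dt/t) satisfy the recurrence n(J_n(y,λ) - J_{n-1}(y,λ)) + y² J_{n+1}(y,λ) + λ y J_n(y,λ) = 0. -/
open MeasureTheory Real Set

private lemma gInt (y r : ℝ) (hr : -1 < r) (k : ℕ) :
    IntegrableOn (fun t : ℝ => t ^ r * Real.exp ((1 - t) * y ^ 2) * (1 - t) ^ k)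
      (Set.Ioo (0:ℝ) 1) := by
  have hbase : IntegrableOn (fun t : ℝ => t ^ r) (Set.Ioo (0:ℝ) 1) := by
    have := (intervalIntegral.intervalIntegrable_rpow' (a := 0) (b := 1) hr).1
    exact this.mono_set Set.Ioo_subset_Ioc_self
  have hdom : IntegrableOn (fun t : ℝ => Real.exp (y ^ 2) * t ^ r) (Set.Ioo (0:ℝ) 1) :=
    hbase.const_mul _
  refine hdom.mono' ?_ ?_
  · apply ContinuousOn.aestronglyMeasurable _ measurableSet_Ioo
    refine ContinuousOn.mul (ContinuousOn.mul ?_ ?_) ?_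
    · exact fun x hx => ((Real.continuousAt_rpow_const x r (Or.inl (ne_of_gt hx.1))).continuousWithinAt)
    · exact (Real.continuous_exp.comp (by continuity)).continuousOn
    · exact (by continuity : Continuous fun t : ℝ => (1 - t) ^ k).continuousOn
  · filter_upwards [ae_restrict_mem measurableSet_Ioo] with t ht
    have h0 : (0:ℝ) < t := ht.1
    have h1 : t < 1 := ht.2
    have hrp : (0:ℝ) ≤ t ^ r := (Real.rpow_pos_of_pos h0 r).le
    have he : Real.exp ((1 - t) * y ^ 2) ≤ Real.exp (y ^ 2) := by
      apply Real.exp_le_exp.2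
      nlinarith [sq_nonneg y]
    have hp : (0:ℝ) ≤ (1 - t) ^ k := pow_nonneg (by linarith) k
    have hp1 : (1 - t) ^ k ≤ 1 := pow_le_one₀ (by linarith) (by linarith)
    rw [Real.norm_eq_abs, abs_of_nonneg (by positivity)]
    calc t ^ r * Real.exp ((1 - t) * y ^ 2) * (1 - t) ^ k
        ≤ t ^ r * Real.exp (y ^ 2) * 1 := by
          apply mul_le_mul (by apply mul_le_mul_of_nonneg_left he hrp) hp1 hp (by positivity)
      _ = Real.exp (y ^ 2) * t ^ r := by ring

private lemma gSplit (y lam : ℝ) (ha : 0 < y ^ 2 + lam * y) (k : ℕ) :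
    (∫ t in Set.Ioo (0:ℝ) 1,
        t ^ (y ^ 2 + lam * y) * Real.exp ((1 - t) * y ^ 2) * (1 - t) ^ k)
    = (∫ t in Set.Ioo (0:ℝ) 1,
        t ^ (y ^ 2 + lam * y - 1) * Real.exp ((1 - t) * y ^ 2) * (1 - t) ^ k)
    - ∫ t in Set.Ioo (0:ℝ) 1,
        t ^ (y ^ 2 + lam * y - 1) * Real.exp ((1 - t) * y ^ 2) * (1 - t) ^ (k + 1) := by
  set a := y ^ 2 + lam * y with hadef
  have h1 := gInt y (a - 1) (by linarith) k
  have h2 := gInt y (a - 1) (by linarith) (k + 1)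
  rw [← integral_sub h1 h2]
  apply setIntegral_congr_fun measurableSet_Ioo
  intro t ht
  have h0 : (0:ℝ) < t := ht.1
  have hta : t ^ a = t ^ (a - 1) * t := by
    rw [← Real.rpow_add_one (ne_of_gt h0) (a - 1), sub_add_cancel]
  simp only [hta, pow_succ]
  ring

/-- Recurrence for the `J_n` functions (Bismut–Lebeau, Eq. (16.4.63)):
with `a = y² + λy > 0`, `A_n = ∫₀¹ t^(a-1) e^((1-t)y²) (1-t)^n dt`,
one has `n (A_n - A_{n-1}) + y² A_{n+1} + λ y A_n = 0` for `n ≥ 1`. -/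
theorem jn_recurrence (y lam : ℝ) (hy : 0 < y) (ha : 0 < y ^ 2 + lam * y)
    (J : ℕ → ℝ)
    (hJ : ∀ m : ℕ, J m =
      ∫ t in Set.Ioo (0 : ℝ) 1,
        t ^ (y ^ 2 + lam * y - 1) * Real.exp ((1 - t) * y ^ 2) * (1 - t) ^ m)
    (n : ℕ) (hn : 1 ≤ n) :
    (n : ℝ) * (J n - J (n - 1)) + y ^ 2 * J (n + 1) + lam * y * J n = 0 := by
  obtain ⟨m, rfl⟩ : ∃ m, n = m + 1 := ⟨n - 1, (Nat.succ_pred_eq_of_pos hn).symm⟩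
  set a := y ^ 2 + lam * y with hadef
  -- the function to integrate by parts
  set F : ℝ → ℝ := fun t => t ^ a * Real.exp ((1 - t) * y ^ 2) * (1 - t) ^ (m + 1) with hF
  set F' : ℝ → ℝ := fun t =>
      a * (t ^ (a - 1) * Real.exp ((1 - t) * y ^ 2) * (1 - t) ^ (m + 1))
      - y ^ 2 * (t ^ a * Real.exp ((1 - t) * y ^ 2) * (1 - t) ^ (m + 1))
      - ((m : ℝ) + 1) * (t ^ a * Real.exp ((1 - t) * y ^ 2) * (1 - t) ^ m) with hF'
  have hderiv : ∀ x ∈ Set.Ioo (0:ℝ) 1, HasDerivAt F (F' x) x := by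
    intro x hx
    have h1 : HasDerivAt (fun t : ℝ => t ^ a) (a * x ^ (a - 1)) x :=
      Real.hasDerivAt_rpow_const (Or.inl (ne_of_gt hx.1))
    have h2 : HasDerivAt (fun t : ℝ => Real.exp ((1 - t) * y ^ 2))
        (Real.exp ((1 - x) * y ^ 2) * (-1 * y ^ 2)) x := by
      exact (((hasDerivAt_id x).const_sub 1).mul_const (y ^ 2)).exp
    have h3 : HasDerivAt (fun t : ℝ => (1 - t) ^ (m + 1))
        (↑(m + 1) * (1 - x) ^ m * (-1)) x := by
      have := (((hasDerivAt_id x).const_sub 1)).pow (m + 1)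
      simpa [Pi.pow_def] using this
    have := (h1.fun_mul h2).fun_mul h3
    refine this.congr_deriv ?_
    simp only [hF', Nat.cast_add, Nat.cast_one]
    ring
  have hcont : ContinuousOn F (Set.Icc (0:ℝ) 1) := by
    apply ContinuousOn.mul (ContinuousOn.mul ?_ ?_) ?_
    · exact continuousOn_id.rpow_const (fun x _ => Or.inr ha.le)
    · exact (Real.continuous_exp.comp (by continuity)).continuousOn
    · exact (by continuity : Continuous fun t : ℝ => (1 - t) ^ (m + 1)).continuousOn
  have hintF' : IntegrableOn F' (Set.Ioo (0:ℝ) 1) := by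
    have i1 := (gInt y (a - 1) (by linarith) (m + 1)).const_mul a
    have i2 := (gInt y a (by linarith) (m + 1)).const_mul (y ^ 2)
    have i3 := (gInt y a (by linarith) m).const_mul ((m : ℝ) + 1)
    exact (i1.sub i2).sub i3
  have hII : IntervalIntegrable F' volume 0 1 := by
    rw [intervalIntegrable_iff_integrableOn_Ioc_of_le (by norm_num)]
    exact hintF'.congr_set_ae Ioo_ae_eq_Ioc.symm
  have hFTC : (∫ t in (0:ℝ)..1, F' t) = F 1 - F 0 :=
    intervalIntegral.integral_eq_sub_of_hasDerivAt_of_le (by norm_num) hcont hderiv hII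
  have hF1 : F 1 = 0 := by simp [hF]
  have hF0 : F 0 = 0 := by
    simp [hF, Real.zero_rpow (ne_of_gt ha)]
  have hIoo : (∫ t in Set.Ioo (0:ℝ) 1, F' t) = 0 := by
    rw [setIntegral_congr_set Ioo_ae_eq_Ioc, ← intervalIntegral.integral_of_le (by norm_num : (0:ℝ) ≤ 1),
      hFTC, hF1, hF0, sub_zero]
  have i1 := gInt y (a - 1) (by linarith) (m + 1)
  have i2 := gInt y a (by linarith) (m + 1)
  have i3 := gInt y a (by linarith) m
  have hsplit : (∫ t in Set.Ioo (0:ℝ) 1, F' t)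
      = a * (∫ t in Set.Ioo (0:ℝ) 1,
          t ^ (a - 1) * Real.exp ((1 - t) * y ^ 2) * (1 - t) ^ (m + 1))
        - y ^ 2 * (∫ t in Set.Ioo (0:ℝ) 1,
          t ^ a * Real.exp ((1 - t) * y ^ 2) * (1 - t) ^ (m + 1))
        - ((m : ℝ) + 1) * (∫ t in Set.Ioo (0:ℝ) 1,
          t ^ a * Real.exp ((1 - t) * y ^ 2) * (1 - t) ^ m) := by
    have i1' : IntegrableOn (fun t : ℝ =>
        a * (t ^ (a - 1) * Real.exp ((1 - t) * y ^ 2) * (1 - t) ^ (m + 1))) (Set.Ioo (0:ℝ) 1) :=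
      i1.const_mul a
    have i2' : IntegrableOn (fun t : ℝ =>
        y ^ 2 * (t ^ a * Real.exp ((1 - t) * y ^ 2) * (1 - t) ^ (m + 1))) (Set.Ioo (0:ℝ) 1) :=
      i2.const_mul _
    have i3' : IntegrableOn (fun t : ℝ =>
        ((m : ℝ) + 1) * (t ^ a * Real.exp ((1 - t) * y ^ 2) * (1 - t) ^ m)) (Set.Ioo (0:ℝ) 1) :=
      i3.const_mul _
    have i12 : IntegrableOn (fun t : ℝ =>
        a * (t ^ (a - 1) * Real.exp ((1 - t) * y ^ 2) * (1 - t) ^ (m + 1))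
        - y ^ 2 * (t ^ a * Real.exp ((1 - t) * y ^ 2) * (1 - t) ^ (m + 1))) (Set.Ioo (0:ℝ) 1) :=
      i1'.sub i2'
    simp only [hF']
    rw [integral_sub i12 i3', integral_sub i1' i2',
      integral_const_mul, integral_const_mul, integral_const_mul]
  have hs1 := gSplit y lam ha (m + 1)
  have hs2 := gSplit y lam ha m
  rw [← hadef] at hs1 hs2
  rw [hIoo, hs1, hs2, ← hJ (m + 1), ← hJ (m + 1 + 1), ← hJ m] at hsplit
  simp only [Nat.add_sub_cancel]
  push_cast
  rw [hadef] at hsplit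
  linarith [hsplit]
end

section
/- For real parameters y > 0 and λ with y² + λy > 0, the functions J_n defined by J_n = ∫₀¹ t^{y²+λy-1} e^{(1-t)y²} (1-t)^n dt satisfy the n = 0 identity y² J_1 + λ y J_0 = 1. -/
open MeasureTheory Real Set

lemma integ_aux (a c : ℝ) (ha : 0 < a) (m : ℕ) :
    IntegrableOn (fun t => t ^ (a - 1) * Real.exp ((1 - t) * c) * (1 - t) ^ m)
      (Set.Ioo (0:ℝ) 1) := by
  have hdom : IntegrableOn (fun t : ℝ => Real.exp |c| * t ^ (a - 1)) (Set.Ioo (0:ℝ) 1) := by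
    have h1 : IntervalIntegrable (fun t : ℝ => t ^ (a - 1)) volume 0 1 :=
      intervalIntegral.intervalIntegrable_rpow' (by linarith)
    have h2 := h1.const_mul (Real.exp |c|)
    have h3 := (intervalIntegrable_iff_integrableOn_Ioc_of_le (by norm_num : (0:ℝ) ≤ 1)).mp h2
    exact (integrableOn_Ioc_iff_integrableOn_Ioo).mp h3
  apply Integrable.mono' hdom
  · apply ContinuousOn.aestronglyMeasurable ?_ measurableSet_Ioo
    apply ContinuousOn.mul
    apply ContinuousOn.mul
    · exact ContinuousOn.rpow_const continuousOn_id fun x hx => Or.inl (ne_of_gt hx.1)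
    · exact (Real.continuous_exp.comp (by continuity)).continuousOn
    · exact (by continuity : Continuous fun t : ℝ => (1 - t) ^ m).continuousOn
  · rw [ae_restrict_iff' measurableSet_Ioo]
    filter_upwards with t ht
    obtain ⟨ht0, ht1⟩ := ht
    have h1 : (0:ℝ) < 1 - t := by linarith
    have hp : (0:ℝ) < t ^ (a - 1) := Real.rpow_pos_of_pos ht0 _
    rw [norm_mul, norm_mul, Real.norm_eq_abs, Real.norm_eq_abs, Real.norm_eq_abs,
      abs_of_pos hp, abs_of_pos (Real.exp_pos _), abs_of_pos (pow_pos h1 m)]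
    have he : Real.exp ((1 - t) * c) ≤ Real.exp |c| := by
      apply Real.exp_le_exp.mpr
      calc (1 - t) * c ≤ |(1 - t) * c| := le_abs_self _
        _ = (1 - t) * |c| := by rw [abs_mul, abs_of_pos h1]
        _ ≤ 1 * |c| := by nlinarith [abs_nonneg c]
        _ = |c| := one_mul _
    have hpow : (1 - t) ^ m ≤ 1 := pow_le_one₀ (le_of_lt h1) (by linarith)
    calc t ^ (a - 1) * Real.exp ((1 - t) * c) * (1 - t) ^ m
        ≤ t ^ (a - 1) * Real.exp |c| * 1 := by
          apply mul_le_mul (mul_le_mul_of_nonneg_left he hp.le) hpow (pow_pos h1 m).le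
          positivity
      _ = Real.exp |c| * t ^ (a - 1) := by ring

/-- The `n = 0` identity `y² J₁ + λ y J₀ = 1` for
`J_n = ∫₀¹ t^(y²+λy-1) e^((1-t)y²) (1-t)^n dt`, with `y > 0` and `y² + λy > 0`. -/
theorem jn_base_identity (y lam : ℝ) (hy : 0 < y) (ha : 0 < y ^ 2 + lam * y)
    (J : ℕ → ℝ)
    (hJ : ∀ m : ℕ, J m =
      ∫ t in Set.Ioo (0 : ℝ) 1,
        t ^ (y ^ 2 + lam * y - 1) * Real.exp ((1 - t) * y ^ 2) * (1 - t) ^ m) :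
    y ^ 2 * J 1 + lam * y * J 0 = 1 := by
  set a := y ^ 2 + lam * y with hadef
  set F : ℝ → ℝ := fun t => t ^ a * Real.exp ((1 - t) * y ^ 2) with hF
  set g : ℝ → ℝ := fun t => t ^ (a - 1) * Real.exp ((1 - t) * y ^ 2) * (a - y ^ 2 * t) with hg
  have hI1 := integ_aux a (y ^ 2) ha 1
  have hI0 := integ_aux a (y ^ 2) ha 0
  -- combine
  have hcomb : y ^ 2 * J 1 + lam * y * J 0 = ∫ t in Set.Ioo (0:ℝ) 1, g t := by
    rw [hJ 1, hJ 0, ← integral_const_mul, ← integral_const_mul, ← integral_add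
      (hI1.const_mul _) (hI0.const_mul _)]
    apply setIntegral_congr_fun measurableSet_Ioo
    intro t ht
    simp only [hg]
    ring
  rw [hcomb]
  -- transfer to interval integral
  have hIoo : (∫ t in Set.Ioo (0:ℝ) 1, g t) = ∫ t in (0:ℝ)..1, g t := by
    rw [intervalIntegral.integral_of_le (by norm_num : (0:ℝ) ≤ 1),
      integral_Ioc_eq_integral_Ioo]
  rw [hIoo]
  -- integrability of g on the interval
  have hg_int : IntervalIntegrable g volume 0 1 := by
    rw [intervalIntegrable_iff_integrableOn_Ioc_of_le (by norm_num : (0:ℝ) ≤ 1),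
      integrableOn_Ioc_iff_integrableOn_Ioo]
    have : IntegrableOn (fun t : ℝ => y ^ 2 * (t ^ (a-1) * Real.exp ((1-t)*y^2) * (1-t)^1)
        + lam * y * (t ^ (a-1) * Real.exp ((1-t)*y^2) * (1-t)^0)) (Set.Ioo (0:ℝ) 1) :=
      (hI1.const_mul _).add (hI0.const_mul _)
    apply this.congr_fun ?_ measurableSet_Ioo
    intro t ht
    simp only [hg]
    ring
  -- derivative
  have hderiv : ∀ x ∈ Set.Ioo (0:ℝ) 1, HasDerivAt F (g x) x := by
    intro x hx
    have hx0 : x ≠ 0 := ne_of_gt hx.1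
    have h1 : HasDerivAt (fun t : ℝ => t ^ a) (a * x ^ (a - 1)) x :=
      Real.hasDerivAt_rpow_const (Or.inl hx0)
    have h2 : HasDerivAt (fun t : ℝ => Real.exp ((1 - t) * y ^ 2))
        (Real.exp ((1 - x) * y ^ 2) * (-(y ^ 2))) x := by
      have hlin : HasDerivAt (fun t : ℝ => (1 - t) * y ^ 2) (-(y ^ 2)) x := by
        have := ((hasDerivAt_const x (1:ℝ)).sub (hasDerivAt_id x)).mul_const (y ^ 2)
        simpa using this
      exact (Real.hasDerivAt_exp _).comp x hlin
    have h3 := h1.mul h2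
    convert (show HasDerivAt F _ x from h3) using 1
    have hxa : x ^ a = x ^ (a - 1) * x := by
      rw [← Real.rpow_add_one hx0]; ring_nf
    simp only [hg]
    rw [hxa]; ring
  -- limits
  have hF0 : Filter.Tendsto F (nhdsWithin 0 (Set.Ioi 0)) (nhds 0) := by
    have h1 : Filter.Tendsto (fun t : ℝ => t ^ a) (nhdsWithin 0 (Set.Ioi 0)) (nhds 0) := by
      have := (Real.continuousAt_rpow_const 0 a (Or.inr ha.le)).continuousWithinAt
        (s := Set.Ioi (0:ℝ))
      simpa [Real.zero_rpow (ne_of_gt ha)] using this.tendsto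
    have h2 : Filter.Tendsto (fun t : ℝ => Real.exp ((1 - t) * y ^ 2))
        (nhdsWithin 0 (Set.Ioi 0)) (nhds (Real.exp ((1 - 0) * y ^ 2))) := by
      apply Filter.Tendsto.mono_left ?_ nhdsWithin_le_nhds
      exact (Real.continuous_exp.comp (by continuity)).continuousAt.tendsto
    have := h1.mul h2
    simpa using this
  have hF1 : Filter.Tendsto F (nhdsWithin 1 (Set.Iio 1)) (nhds 1) := by
    have hc : ContinuousAt F 1 := by
      apply ContinuousAt.mul
      · exact Real.continuousAt_rpow_const 1 a (Or.inl one_ne_zero)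
      · exact (Real.continuous_exp.comp (by continuity)).continuousAt
    have := hc.continuousWithinAt (s := Set.Iio (1:ℝ))
    have hval : F 1 = 1 := by
      simp [hF, Real.one_rpow]
    have ht2 := this.tendsto
    rw [hval] at ht2
    exact ht2
  have := intervalIntegral.integral_eq_sub_of_hasDerivAt_of_tendsto
    (by norm_num : (0:ℝ) < 1) hderiv hg_int hF0 hF1
  rw [this]; ring
end

section
/- For α > -1, the alternating series φ⁻_α(λ) = Σ_{n≥1} (-1)^n n^α e^{-λ√n} remains bounded as λ → 0⁺ and converges to a finite limit C_α as λ → 0⁺. -/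
open Real Filter Topology

namespace AltDirichlet

noncomputable def D (h : ℝ → ℝ) : ℝ → ℝ := fun x => h x - h (x + 1)

noncomputable def dN (u : ℕ → ℝ) : ℕ → ℝ := fun n => u n - u (n + 1)

inductive Expr : ℝ → (ℝ → ℝ → ℝ) → Prop
  | basic (j : ℕ) (w : ℝ) :
      Expr w (fun lam x => lam ^ j * x ^ (w + (j : ℝ) / 2) * Real.exp (-lam * Real.sqrt x))
  | smul (c : ℝ) {w : ℝ} {g : ℝ → ℝ → ℝ} : Expr w g → Expr w (fun lam x => c * g lam x)
  | add {w : ℝ} {g₁ g₂ : ℝ → ℝ → ℝ} : Expr w g₁ → Expr w g₂ →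
      Expr w (fun lam x => g₁ lam x + g₂ lam x)

lemma expr_deriv {w : ℝ} {g : ℝ → ℝ → ℝ} (hg : Expr w g) :
    ∃ g', Expr (w - 1) g' ∧ ∀ lam : ℝ, ∀ x : ℝ, 0 < x → HasDerivAt (g lam) (g' lam x) x := by
  induction hg with
  | basic j w =>
    refine ⟨fun lam x =>
        (w + (j : ℝ) / 2) * (lam ^ j * x ^ ((w - 1) + (j : ℝ) / 2) * Real.exp (-lam * Real.sqrt x))
        + (-(1/2) : ℝ) * (lam ^ (j+1) * x ^ ((w - 1) + ((j+1 : ℕ) : ℝ) / 2) *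
            Real.exp (-lam * Real.sqrt x)), ?_, ?_⟩
    · exact Expr.add (Expr.smul _ (Expr.basic j (w - 1))) (Expr.smul _ (Expr.basic (j+1) (w - 1)))
    · intro lam x hx
      have hsq : HasDerivAt Real.sqrt (1 / (2 * Real.sqrt x)) x := Real.hasDerivAt_sqrt hx.ne'
      have hexp : HasDerivAt (fun y : ℝ => Real.exp (-lam * Real.sqrt y))
          (Real.exp (-lam * Real.sqrt x) * (-lam * (1 / (2 * Real.sqrt x)))) x :=
        (hsq.const_mul (-lam)).exp
      have hrp : HasDerivAt (fun y : ℝ => y ^ (w + (j : ℝ) / 2))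
          ((w + (j : ℝ) / 2) * x ^ (w + (j : ℝ) / 2 - 1)) x :=
        Real.hasDerivAt_rpow_const (Or.inl hx.ne')
      have h := ((hrp.mul hexp).const_mul (lam ^ j))
      have hfun : (fun y : ℝ => lam ^ j * (y ^ (w + (j : ℝ) / 2) * Real.exp (-lam * Real.sqrt y)))
          = fun y : ℝ => lam ^ j * y ^ (w + (j : ℝ) / 2) * Real.exp (-lam * Real.sqrt y) := by
        funext y; ring
      simp only [Pi.mul_apply] at h; rw [hfun] at h
      refine h.congr_deriv ?_
      symm
      have hxhalf : (0:ℝ) < x ^ ((1:ℝ)/2) := Real.rpow_pos_of_pos hx _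
      have e1 : x ^ (w + (j : ℝ) / 2 - 1) = x ^ ((w - 1) + (j : ℝ) / 2) := by ring_nf
      have e2 : x ^ ((w - 1) + ((j+1 : ℕ) : ℝ) / 2)
          = x ^ (w + (j : ℝ) / 2) * (x ^ ((1:ℝ)/2))⁻¹ := by
        rw [← Real.rpow_neg hx.le, ← Real.rpow_add hx]
        push_cast
        ring_nf
      beta_reduce
      rw [e2, Real.sqrt_eq_rpow]
      field_simp
      ring
  | smul c hg ih =>
    obtain ⟨g', h1, h2⟩ := ih
    exact ⟨fun lam x => c * g' lam x, Expr.smul c h1,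
      fun lam x hx => (h2 lam x hx).const_mul c⟩
  | add hg₁ hg₂ ih₁ ih₂ =>
    obtain ⟨g₁', h11, h12⟩ := ih₁
    obtain ⟨g₂', h21, h22⟩ := ih₂
    exact ⟨fun lam x => g₁' lam x + g₂' lam x, Expr.add h11 h21,
      fun lam x hx => (h12 lam x hx).add (h22 lam x hx)⟩

lemma pow_mul_exp_neg_le (j : ℕ) {t : ℝ} (ht : 0 ≤ t) : t ^ j * Real.exp (-t) ≤ (Nat.factorial j : ℝ) := by
  have h1 : t ^ j / (Nat.factorial j : ℝ) ≤ Real.exp t := by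
    calc t ^ j / (Nat.factorial j : ℝ) ≤ ∑ i ∈ Finset.range (j+1), t ^ i / (Nat.factorial i : ℝ) := by
          refine Finset.single_le_sum (f := fun i => t ^ i / (Nat.factorial i : ℝ)) ?_ ?_
          · intro i _; positivity
          · simp
      _ ≤ Real.exp t := Real.sum_le_exp_of_nonneg ht _
  have hj : (0:ℝ) < (Nat.factorial j : ℝ) := by positivity
  rw [div_le_iff₀ hj] at h1
  rw [Real.exp_neg]
  rw [mul_inv_le_iff₀ (Real.exp_pos t)]
  linarith [h1]

lemma expr_bound {w : ℝ} {g : ℝ → ℝ → ℝ} (hg : Expr w g) :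
    ∃ C : ℝ, ∀ lam : ℝ, 0 < lam → ∀ x : ℝ, 1 ≤ x → |g lam x| ≤ C * x ^ w := by
  induction hg with
  | basic j w =>
    refine ⟨(Nat.factorial j : ℝ), ?_⟩
    intro lam hlam x hx
    have hx0 : (0:ℝ) < x := lt_of_lt_of_le one_pos hx
    have hs : (0:ℝ) < Real.sqrt x := Real.sqrt_pos.2 hx0
    set t := lam * Real.sqrt x with htdef
    have ht : 0 ≤ t := by positivity
    have key : t ^ j * Real.exp (-t) ≤ (Nat.factorial j : ℝ) := pow_mul_exp_neg_le j ht
    have hsj : (Real.sqrt x) ^ j = x ^ ((j : ℝ) / 2) := by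
      rw [Real.sqrt_eq_rpow, ← Real.rpow_natCast (x ^ ((1:ℝ)/2)) j, ← Real.rpow_mul hx0.le]
      ring_nf
    have hxp : (0:ℝ) < x ^ ((j : ℝ)/2) := Real.rpow_pos_of_pos hx0 _
    have hneg : -lam * Real.sqrt x = -t := by rw [htdef]; ring
    have h2 : lam ^ j * Real.exp (-t) ≤ (Nat.factorial j : ℝ) / x ^ ((j : ℝ)/2) := by
      rw [le_div_iff₀ hxp]
      calc lam ^ j * Real.exp (-t) * x ^ ((j : ℝ)/2)
          = t ^ j * Real.exp (-t) := by rw [← hsj, htdef, mul_pow]; ring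
        _ ≤ (Nat.factorial j : ℝ) := key
    have habs : |lam ^ j * x ^ (w + (j : ℝ) / 2) * Real.exp (-lam * Real.sqrt x)|
        = lam ^ j * x ^ (w + (j : ℝ) / 2) * Real.exp (-lam * Real.sqrt x) := by
      apply abs_of_nonneg; positivity
    rw [habs, hneg]
    calc lam ^ j * x ^ (w + (j : ℝ) / 2) * Real.exp (-t)
        = (lam ^ j * Real.exp (-t)) * x ^ (w + (j : ℝ) / 2) := by ring
      _ ≤ ((Nat.factorial j : ℝ) / x ^ ((j : ℝ)/2)) * x ^ (w + (j : ℝ) / 2) := by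
          exact mul_le_mul_of_nonneg_right h2 (Real.rpow_nonneg hx0.le _)
      _ = (Nat.factorial j : ℝ) * x ^ w := by
          rw [Real.rpow_add hx0]
          field_simp
  | smul c hg ih =>
    obtain ⟨C, hC⟩ := ih
    rename_i w g
    refine ⟨|c| * C, fun lam hlam x hx => ?_⟩
    show |c * g lam x| ≤ |c| * C * x ^ w
    calc |c * g lam x| = |c| * |g lam x| := abs_mul c _
      _ ≤ |c| * (C * x ^ w) := mul_le_mul_of_nonneg_left (hC lam hlam x hx) (abs_nonneg c)
      _ = |c| * C * x ^ w := by ring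
  | add hg₁ hg₂ ih₁ ih₂ =>
    obtain ⟨C₁, hC₁⟩ := ih₁
    obtain ⟨C₂, hC₂⟩ := ih₂
    rename_i w g₁ g₂
    refine ⟨C₁ + C₂, fun lam hlam x hx => ?_⟩
    show |g₁ lam x + g₂ lam x| ≤ (C₁ + C₂) * x ^ w
    calc |g₁ lam x + g₂ lam x| ≤ |g₁ lam x| + |g₂ lam x| := abs_add_le _ _
      _ ≤ C₁ * x ^ w + C₂ * x ^ w := add_le_add (hC₁ lam hlam x hx) (hC₂ lam hlam x hx)
      _ = (C₁ + C₂) * x ^ w := by ring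

lemma hasDerivAt_D_iter (k : ℕ) :
    ∀ (h h' : ℝ → ℝ), (∀ x : ℝ, 0 < x → HasDerivAt h (h' x) x) →
    ∀ x : ℝ, 0 < x → HasDerivAt (D^[k] h) (D^[k] h' x) x := by
  induction k with
  | zero => intro h h' H x hx; simpa using H x hx
  | succ k ih =>
    intro h h' H x hx
    rw [Function.iterate_succ_apply, Function.iterate_succ_apply]
    apply ih
    · intro y hy
      have h1 := H y hy
      have h2 : HasDerivAt (fun z : ℝ => h (z + 1)) (h' (y + 1)) y := by
        have := (H (y + 1) (by linarith)).comp y ((hasDerivAt_id y).add_const 1)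
        simpa [Function.comp_def] using this
      have h3 := h1.sub h2
      show HasDerivAt (D h) (h' y - h' (y + 1)) y
      exact h3
    · exact hx

lemma expr_diff_bound (k : ℕ) :
    ∀ (w : ℝ) (g : ℝ → ℝ → ℝ), Expr w g →
    ∃ C : ℝ, ∀ lam : ℝ, 0 < lam → ∀ x : ℝ, 1 ≤ x → |D^[k] (g lam) x| ≤ C * x ^ (w - k) := by
  induction k with
  | zero =>
    intro w g hg
    obtain ⟨C, hC⟩ := expr_bound hg
    refine ⟨C, fun lam hlam x hx => ?_⟩
    simpa using hC lam hlam x hx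
  | succ k ih =>
    intro w g hg
    obtain ⟨g', hg', hder⟩ := expr_deriv hg
    obtain ⟨C, hC⟩ := ih (w - 1) g' hg'
    set e : ℝ := w - 1 - k with he
    refine ⟨C * max 1 ((2:ℝ) ^ e), fun lam hlam x hx => ?_⟩
    have hC0 : 0 ≤ C := by
      have h := hC 1 one_pos 1 le_rfl
      have := abs_nonneg (D^[k] (g' 1) 1)
      simpa using le_trans this h
    have hx0 : (0:ℝ) < x := lt_of_lt_of_le one_pos hx
    have hIcc : ∀ y ∈ Set.Icc x (x+1), (0:ℝ) < y ∧ 1 ≤ y := by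
      intro y hy
      constructor
      · linarith [hy.1]
      · linarith [hy.1]
    have hybound : ∀ y ∈ Set.Icc x (x+1),
        ‖D^[k] (g' lam) y‖ ≤ C * (max 1 ((2:ℝ) ^ e) * x ^ e) := by
      intro y hy
      obtain ⟨hy0, hy1⟩ := hIcc y hy
      have h1 : |D^[k] (g' lam) y| ≤ C * y ^ e := by
        have h := hC lam hlam y hy1
        have : (w - 1 - (k:ℝ)) = e := by rw [he]
        simpa [this] using h
      have h2 : y ^ e ≤ max 1 ((2:ℝ) ^ e) * x ^ e := by
        rcases le_or_gt 0 e with h|h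
        · calc y ^ e ≤ (2*x) ^ e := Real.rpow_le_rpow hy0.le (by linarith [hy.2]) h
            _ = 2 ^ e * x ^ e := Real.mul_rpow (by norm_num) hx0.le
            _ ≤ max 1 ((2:ℝ) ^ e) * x ^ e :=
              mul_le_mul_of_nonneg_right (le_max_right _ _) (Real.rpow_nonneg hx0.le _)
        · calc y ^ e ≤ x ^ e := Real.rpow_le_rpow_of_nonpos hx0 hy.1 h.le
            _ ≤ max 1 ((2:ℝ) ^ e) * x ^ e := by
              nlinarith [Real.rpow_nonneg hx0.le e, le_max_left (1:ℝ) ((2:ℝ) ^ e)]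
      rw [Real.norm_eq_abs]
      calc |D^[k] (g' lam) y| ≤ C * y ^ e := h1
        _ ≤ C * (max 1 ((2:ℝ) ^ e) * x ^ e) := mul_le_mul_of_nonneg_left h2 hC0
    have hderiv : ∀ y ∈ Set.Icc x (x+1),
        HasDerivWithinAt (D^[k] (g lam)) (D^[k] (g' lam) y) (Set.Icc x (x+1)) y := by
      intro y hy
      exact (hasDerivAt_D_iter k (g lam) (g' lam) (fun z hz => hder lam z hz) y
        (hIcc y hy).1).hasDerivWithinAt
    have hmvt := Convex.norm_image_sub_le_of_norm_hasDerivWithin_le hderiv hybound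
      (convex_Icc x (x+1))
      (Set.left_mem_Icc.2 (by linarith)) (Set.right_mem_Icc.2 (by linarith))
    rw [Function.iterate_succ_apply']
    have hnorm : ‖(x + 1) - x‖ = 1 := by norm_num
    rw [hnorm, mul_one, Real.norm_eq_abs] at hmvt
    have hDabs : |D (D^[k] (g lam)) x| = |D^[k] (g lam) (x+1) - D^[k] (g lam) x| := by
      rw [show D (D^[k] (g lam)) x = D^[k] (g lam) x - D^[k] (g lam) (x+1) from rfl]
      rw [abs_sub_comm]
    rw [hDabs]
    calc |D^[k] (g lam) (x+1) - D^[k] (g lam) x| ≤ C * (max 1 ((2:ℝ) ^ e) * x ^ e) := hmvt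
      _ = C * max 1 ((2:ℝ) ^ e) * x ^ (w - (k+1:ℕ)) := by
          rw [show (w - ((k+1:ℕ):ℝ)) = e from by rw [he]; push_cast; ring]
          ring

lemma dN_link (k : ℕ) :
    ∀ (h : ℝ → ℝ) (u : ℕ → ℝ), (∀ n : ℕ, u n = h ((n : ℝ) + 1)) →
    ∀ n : ℕ, dN^[k] u n = D^[k] h ((n : ℝ) + 1) := by
  induction k with
  | zero => intro h u hu n; simpa using hu n
  | succ k ih =>
    intro h u hu n
    rw [Function.iterate_succ_apply, Function.iterate_succ_apply]
    apply ih (D h) (dN u)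
    intro m
    show u m - u (m + 1) = h ((m : ℝ) + 1) - h (((m : ℝ) + 1) + 1)
    rw [hu m, hu (m + 1)]
    push_cast
    ring_nf

lemma summable_abs_dN {u : ℕ → ℝ} (hu : Summable (fun n => |u n|)) :
    Summable (fun n => |dN u n|) := by
  refine Summable.of_nonneg_of_le (fun n => abs_nonneg _) (fun n => ?_)
    (hu.add ((summable_nat_add_iff 1).2 hu))
  exact abs_sub _ _

lemma summable_abs_dN_iter (k : ℕ) {u : ℕ → ℝ} (hu : Summable (fun n => |u n|)) :
    Summable (fun n => |dN^[k] u n|) := by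
  induction k with
  | zero => simpa using hu
  | succ k ih =>
    rw [Function.iterate_succ_apply']
    exact summable_abs_dN ih

lemma step_identity (u : ℕ → ℝ) (hu : Summable (fun n => |u n|)) :
    ∑' n : ℕ, (-1 : ℝ) ^ (n + 1) * u n
      = ((∑' n : ℕ, (-1 : ℝ) ^ (n + 1) * dN u n) - u 0) / 2 := by
  have habs : ∀ (v : ℕ → ℝ), Summable (fun n => |v n|) →
      Summable (fun n => (-1 : ℝ) ^ (n + 1) * v n) := by
    intro v hv
    apply Summable.of_norm
    refine hv.congr fun n => ?_
    simp [Real.norm_eq_abs, abs_mul, abs_pow]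
  have hv : Summable (fun n => (-1 : ℝ) ^ (n + 1) * u n) := habs u hu
  have hu1 : Summable (fun n => |u (n + 1)|) := (summable_nat_add_iff 1).2 hu
  have hv1 : Summable (fun n => (-1 : ℝ) ^ (n + 1) * u (n + 1)) := habs _ hu1
  have h0 := Summable.tsum_eq_zero_add hv
  have h1 : ∀ n : ℕ, (-1 : ℝ) ^ ((n + 1) + 1) * u (n + 1)
      = -((-1 : ℝ) ^ (n + 1) * u (n + 1)) := by
    intro n; ring
  have h2 : ∑' n : ℕ, (-1 : ℝ) ^ ((n + 1) + 1) * u (n + 1)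
      = -∑' n : ℕ, (-1 : ℝ) ^ (n + 1) * u (n + 1) := by
    rw [tsum_congr h1, tsum_neg]
  have h3 : ∑' n : ℕ, (-1 : ℝ) ^ (n + 1) * dN u n
      = (∑' n : ℕ, (-1 : ℝ) ^ (n + 1) * u n) - ∑' n : ℕ, (-1 : ℝ) ^ (n + 1) * u (n + 1) := by
    rw [← Summable.tsum_sub hv hv1]
    refine tsum_congr fun n => ?_
    show (-1 : ℝ) ^ (n + 1) * (u n - u (n + 1)) = _
    ring
  rw [h2] at h0
  rw [h3]
  have h4 : ((-1 : ℝ)) ^ (0 + 1) * u 0 = -u 0 := by ring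
  rw [h4] at h0
  linarith

lemma iter_identity (k : ℕ) (u : ℕ → ℝ) (hu : Summable (fun n => |u n|)) :
    ∑' n : ℕ, (-1 : ℝ) ^ (n + 1) * u n
      = (∑ j ∈ Finset.range k, -(dN^[j] u 0) / 2 ^ (j + 1))
        + (∑' n : ℕ, (-1 : ℝ) ^ (n + 1) * dN^[k] u n) / 2 ^ k := by
  induction k with
  | zero => simp
  | succ k ih =>
    have hstep := step_identity (dN^[k] u) (summable_abs_dN_iter k hu)
    rw [ih, Finset.sum_range_succ, Function.iterate_succ_apply' dN k u, hstep]
    have h2k : ((2 : ℝ) ^ k) ≠ 0 := by positivity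
    field_simp
    ring

lemma tendsto_dN_iter (α : ℝ) (j : ℕ) :
    ∀ n : ℕ, Tendsto
      (fun lam : ℝ => dN^[j]
        (fun m : ℕ => ((m : ℝ) + 1) ^ α * Real.exp (-lam * Real.sqrt ((m : ℝ) + 1))) n)
      (nhdsWithin 0 (Set.Ioi 0)) (nhds (dN^[j] (fun m : ℕ => ((m : ℝ) + 1) ^ α) n)) := by
  induction j with
  | zero =>
    intro n
    simp only [Function.iterate_zero, id_eq]
    have hc : Continuous fun lam : ℝ =>
        ((n : ℝ) + 1) ^ α * Real.exp (-lam * Real.sqrt ((n : ℝ) + 1)) := by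
      continuity
    have h := (hc.tendsto 0).mono_left (nhdsWithin_le_nhds (s := Set.Ioi (0:ℝ)))
    simpa using h
  | succ j ih =>
    intro n
    have heq : ∀ lam : ℝ, dN^[j+1]
        (fun m : ℕ => ((m : ℝ) + 1) ^ α * Real.exp (-lam * Real.sqrt ((m : ℝ) + 1))) n
        = dN^[j] (fun m : ℕ => ((m : ℝ) + 1) ^ α * Real.exp (-lam * Real.sqrt ((m : ℝ) + 1))) n
          - dN^[j] (fun m : ℕ => ((m : ℝ) + 1) ^ α * Real.exp (-lam * Real.sqrt ((m : ℝ) + 1)))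
              (n + 1) := by
      intro lam
      rw [Function.iterate_succ_apply']
      rfl
    have heq0 : dN^[j+1] (fun m : ℕ => ((m : ℝ) + 1) ^ α) n
        = dN^[j] (fun m : ℕ => ((m : ℝ) + 1) ^ α) n
          - dN^[j] (fun m : ℕ => ((m : ℝ) + 1) ^ α) (n + 1) := by
      rw [Function.iterate_succ_apply']
      rfl
    rw [heq0]
    exact Tendsto.congr (fun lam => (heq lam).symm) ((ih n).sub (ih (n + 1)))

lemma summable_abs_a (α : ℝ) (hα : -1 < α) {lam : ℝ} (hlam : 0 < lam) :
    Summable (fun n : ℕ => |((n : ℝ) + 1) ^ α * Real.exp (-lam * Real.sqrt ((n : ℝ) + 1))|) := by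
  set m := ⌈2 * α⌉₊ + 4 with hm
  have hmge : 2 * α + 4 ≤ (m : ℝ) := by
    rw [hm]; push_cast; linarith [Nat.le_ceil (2 * α)]
  have hp : α - (m : ℝ) / 2 < -1 := by linarith
  have hb : ∀ n : ℕ, |((n : ℝ) + 1) ^ α * Real.exp (-lam * Real.sqrt ((n : ℝ) + 1))|
      ≤ ((Nat.factorial m : ℝ) / lam ^ m) * ((n : ℝ) + 1) ^ (α - (m : ℝ) / 2) := by
    intro n
    set x : ℝ := (n : ℝ) + 1 with hxdef
    have hx1 : (1:ℝ) ≤ x := by rw [hxdef]; linarith [Nat.cast_nonneg (α := ℝ) n]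
    have hx0 : (0:ℝ) < x := lt_of_lt_of_le one_pos hx1
    have hs : (0:ℝ) < Real.sqrt x := Real.sqrt_pos.2 hx0
    set t := lam * Real.sqrt x with htdef
    have ht : 0 ≤ t := by positivity
    have key : t ^ m * Real.exp (-t) ≤ (Nat.factorial m : ℝ) := pow_mul_exp_neg_le m ht
    have hsj : (Real.sqrt x) ^ m = x ^ ((m : ℝ) / 2) := by
      rw [Real.sqrt_eq_rpow, ← Real.rpow_natCast (x ^ ((1:ℝ)/2)) m, ← Real.rpow_mul hx0.le]
      ring_nf
    have hxp : (0:ℝ) < x ^ ((m : ℝ) / 2) := Real.rpow_pos_of_pos hx0 _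
    have hneg : -lam * Real.sqrt x = -t := by rw [htdef]; ring
    have habs : |x ^ α * Real.exp (-lam * Real.sqrt x)|
        = x ^ α * Real.exp (-lam * Real.sqrt x) := by
      apply abs_of_nonneg; positivity
    rw [habs, hneg]
    have hexp : Real.exp (-t) ≤ (Nat.factorial m : ℝ) / (lam ^ m * x ^ ((m : ℝ) / 2)) := by
      rw [le_div_iff₀ (by positivity)]
      calc Real.exp (-t) * (lam ^ m * x ^ ((m : ℝ) / 2))
          = t ^ m * Real.exp (-t) := by rw [← hsj, htdef, mul_pow]; ring
        _ ≤ (Nat.factorial m : ℝ) := key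
    calc x ^ α * Real.exp (-t)
        ≤ x ^ α * ((Nat.factorial m : ℝ) / (lam ^ m * x ^ ((m : ℝ) / 2))) :=
          mul_le_mul_of_nonneg_left hexp (Real.rpow_nonneg hx0.le _)
      _ = ((Nat.factorial m : ℝ) / lam ^ m) * (x ^ α / x ^ ((m : ℝ) / 2)) := by ring
      _ = ((Nat.factorial m : ℝ) / lam ^ m) * x ^ (α - (m : ℝ) / 2) := by
          rw [← Real.rpow_sub hx0]
  refine Summable.of_nonneg_of_le (fun n => abs_nonneg _) hb ?_
  apply Summable.mul_left
  have h1 : Summable (fun n : ℕ => ((n : ℝ)) ^ (α - (m : ℝ) / 2)) := Real.summable_nat_rpow.2 hp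
  have h2 := (summable_nat_add_iff 1).2 h1
  refine h2.congr fun n => ?_
  push_cast
  ring_nf

end AltDirichlet

open AltDirichlet

/-- For `α > -1`, the alternating series `φ⁻_α(λ) = Σ_{n≥1} (-1)^n n^α e^(-λ√n)`
converges for every `λ > 0` and tends to a finite limit `C_α` as `λ → 0⁺`
(in particular it remains bounded as `λ → 0⁺`). -/
theorem alternating_dirichlet_series_limit (α : ℝ) (hα : -1 < α) :
    (∀ lam : ℝ, 0 < lam →
      Summable (fun n : ℕ =>
        (-1 : ℝ) ^ (n + 1) * ((n : ℝ) + 1) ^ α * Real.exp (-lam * Real.sqrt ((n : ℝ) + 1)))) ∧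
    ∃ C : ℝ,
      Tendsto
        (fun lam : ℝ =>
          ∑' n : ℕ,
            (-1 : ℝ) ^ (n + 1) * ((n : ℝ) + 1) ^ α * Real.exp (-lam * Real.sqrt ((n : ℝ) + 1)))
        (nhdsWithin 0 (Set.Ioi 0)) (nhds C) := by
  have hsummable : ∀ lam : ℝ, 0 < lam →
      Summable (fun n : ℕ =>
        (-1 : ℝ) ^ (n + 1) * ((n : ℝ) + 1) ^ α * Real.exp (-lam * Real.sqrt ((n : ℝ) + 1))) := by
    intro lam hlam
    apply Summable.of_norm
    refine (summable_abs_a α hα hlam).congr fun n => ?_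
    simp [Real.norm_eq_abs, abs_mul, abs_pow, mul_assoc]
  refine ⟨hsummable, ?_⟩
  set k := ⌈α⌉₊ + 2 with hk
  have hk1 : α - (k : ℝ) < -1 := by
    rw [hk]; push_cast; linarith [Nat.le_ceil α]
  obtain ⟨C, hC⟩ := expr_diff_bound k α _ (Expr.basic 0 α)
  have hfeq : ∀ lam : ℝ,
      (fun x : ℝ => lam ^ (0 : ℕ) * x ^ (α + ((0 : ℕ) : ℝ) / 2) * Real.exp (-lam * Real.sqrt x))
        = fun x : ℝ => x ^ α * Real.exp (-lam * Real.sqrt x) := by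
    intro lam; funext x; norm_num
  have hC' : ∀ lam : ℝ, 0 < lam → ∀ x : ℝ, 1 ≤ x →
      |D^[k] (fun x : ℝ => x ^ α * Real.exp (-lam * Real.sqrt x)) x| ≤ C * x ^ (α - (k : ℝ)) := by
    intro lam hlam x hx
    have h := hC lam hlam x hx
    rwa [hfeq lam] at h
  set a : ℝ → ℕ → ℝ :=
    fun lam n => ((n : ℝ) + 1) ^ α * Real.exp (-lam * Real.sqrt ((n : ℝ) + 1)) with ha
  set a0 : ℕ → ℝ := fun n => ((n : ℝ) + 1) ^ α with ha0
  have hlink : ∀ lam : ℝ, ∀ n : ℕ, dN^[k] (a lam) n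
      = D^[k] (fun x : ℝ => x ^ α * Real.exp (-lam * Real.sqrt x)) ((n : ℝ) + 1) :=
    fun lam => dN_link k _ _ (fun n => rfl)
  have hx1 : ∀ n : ℕ, (1 : ℝ) ≤ (n : ℝ) + 1 := fun n => by
    linarith [Nat.cast_nonneg (α := ℝ) n]
  have hbound : ∀ lam : ℝ, 0 < lam → ∀ n : ℕ,
      |dN^[k] (a lam) n| ≤ C * ((n : ℝ) + 1) ^ (α - (k : ℝ)) := by
    intro lam hlam n
    rw [hlink lam n]
    exact hC' lam hlam _ (hx1 n)
  have hlim : ∀ n : ℕ, Tendsto (fun lam => dN^[k] (a lam) n)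
      (nhdsWithin 0 (Set.Ioi 0)) (nhds (dN^[k] a0 n)) := tendsto_dN_iter α k
  have hbound0 : ∀ n : ℕ, |dN^[k] a0 n| ≤ C * ((n : ℝ) + 1) ^ (α - (k : ℝ)) := by
    intro n
    refine le_of_tendsto (hlim n).abs ?_
    filter_upwards [self_mem_nhdsWithin] with lam hlam
    exact hbound lam hlam n
  have hsumb : Summable (fun n : ℕ => C * ((n : ℝ) + 1) ^ (α - (k : ℝ))) := by
    apply Summable.mul_left
    have h1 : Summable (fun n : ℕ => ((n : ℝ)) ^ (α - (k : ℝ))) := Real.summable_nat_rpow.2 hk1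
    refine ((summable_nat_add_iff 1).2 h1).congr fun n => ?_
    push_cast; ring_nf
  have htail : Tendsto (fun lam => ∑' n : ℕ, (-1 : ℝ) ^ (n + 1) * dN^[k] (a lam) n)
      (nhdsWithin 0 (Set.Ioi 0)) (nhds (∑' n : ℕ, (-1 : ℝ) ^ (n + 1) * dN^[k] a0 n)) := by
    apply tendsto_tsum_of_dominated_convergence hsumb
    · intro n
      exact (hlim n).const_mul _
    · filter_upwards [self_mem_nhdsWithin] with lam hlam
      intro n
      calc ‖(-1 : ℝ) ^ (n + 1) * dN^[k] (a lam) n‖ = |dN^[k] (a lam) n| := by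
            simp [Real.norm_eq_abs, abs_mul, abs_pow]
        _ ≤ C * ((n : ℝ) + 1) ^ (α - (k : ℝ)) := hbound lam hlam n
  have hbd : Tendsto (fun lam => ∑ j ∈ Finset.range k, -(dN^[j] (a lam) 0) / 2 ^ (j + 1))
      (nhdsWithin 0 (Set.Ioi 0))
      (nhds (∑ j ∈ Finset.range k, -(dN^[j] a0 0) / 2 ^ (j + 1))) := by
    apply tendsto_finset_sum
    intro j _
    exact ((tendsto_dN_iter α j 0).neg).div_const _
  refine ⟨(∑ j ∈ Finset.range k, -(dN^[j] a0 0) / 2 ^ (j + 1))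
    + (∑' n : ℕ, (-1 : ℝ) ^ (n + 1) * dN^[k] a0 n) / 2 ^ k, ?_⟩
  have htot := hbd.add (htail.div_const ((2 : ℝ) ^ k))
  refine Tendsto.congr' ?_ htot
  filter_upwards [self_mem_nhdsWithin] with lam hlam
  have hid := iter_identity k (a lam) (summable_abs_a α hα hlam)
  rw [← hid]
  refine tsum_congr fun n => ?_
  simp only [ha]
  ring
end

section
/- For λ > 0, the sum over odd n of √n e^{-λ√n} satisfies Σ_{n≥1, n odd} √n e^{-λ√n} ~ 2/λ³ as λ → 0⁺. -/
open Real Filter Topology MeasureTheory Set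

noncomputable def hfun (s : ℝ) : ℝ := s * Real.exp (-s)

lemma hfun_hasDerivAt (x : ℝ) : HasDerivAt hfun ((1 - x) * Real.exp (-x)) x := by
  have h1 : HasDerivAt (fun s : ℝ => Real.exp (-s)) (-Real.exp (-x)) x := by
    simpa [Function.comp_def] using (Real.hasDerivAt_exp (-x)).comp x ((hasDerivAt_id x).neg)
  have := (hasDerivAt_id x).mul h1
  refine this.congr_deriv ?_
  simp [id]
  ring

lemma abs_deriv_le {x : ℝ} (hx : 0 ≤ x) :
    |(1 - x) * Real.exp (-x)| ≤ 2 * Real.exp (-x / 2) := by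
  have h1 : |1 - x| ≤ 1 + x := by
    rw [abs_le]; constructor <;> linarith
  have h2 : 1 + x ≤ 2 * Real.exp (x / 2) := by
    have := Real.add_one_le_exp (x / 2)
    nlinarith [Real.exp_pos (x / 2)]
  have h3 : |(1 - x) * Real.exp (-x)| = |1 - x| * Real.exp (-x) := by
    rw [abs_mul, abs_of_pos (Real.exp_pos _)]
  rw [h3]
  calc |1 - x| * Real.exp (-x) ≤ (2 * Real.exp (x / 2)) * Real.exp (-x) := by
        apply mul_le_mul_of_nonneg_right (le_trans h1 h2) (Real.exp_pos _).le
    _ = 2 * Real.exp (-x / 2) := by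
        rw [mul_assoc, ← Real.exp_add]; ring_nf

lemma integral_sq_exp_Ioi : ∫ x in Ioi (0:ℝ), x ^ 2 * Real.exp (-x) = 2 := by
  have h := Real.Gamma_eq_integral (by norm_num : (0:ℝ) < 3)
  have h2 : Real.Gamma 3 = 2 := by
    have := Real.Gamma_nat_eq_factorial 2
    norm_num at this
    convert this using 2
    norm_num
  rw [h2] at h
  rw [h]
  refine setIntegral_congr_fun measurableSet_Ioi (fun x hx => ?_)
  have hx2 : x ^ ((3:ℝ) - 1) = x ^ (2:ℕ) := by
    rw [show (3:ℝ) - 1 = ((2:ℕ):ℝ) by norm_num, Real.rpow_natCast]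
  rw [hx2]; ring


lemma integrableOn_sq_exp : IntegrableOn (fun x : ℝ => x ^ 2 * Real.exp (-x)) (Ioi 0) := by
  have h := Real.GammaIntegral_convergent (by norm_num : (0:ℝ) < 3)
  refine (IntegrableOn.congr_fun h ?_ measurableSet_Ioi)
  intro x hx
  have hx2 : x ^ ((3:ℝ) - 1) = x ^ (2:ℕ) := by
    rw [show (3:ℝ) - 1 = ((2:ℕ):ℝ) by norm_num, Real.rpow_natCast]
  show Real.exp (-x) * x ^ ((3:ℝ) - 1) = x ^ 2 * Real.exp (-x)
  rw [hx2]; ring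

noncomputable def sk (δ : ℝ) (k : ℕ) : ℝ := Real.sqrt (2 * k * δ)
noncomputable def mk' (δ : ℝ) (k : ℕ) : ℝ := Real.sqrt ((2 * k + 1) * δ)
noncomputable def uk (δ : ℝ) (k : ℕ) : ℝ := δ * hfun (mk' δ k)
noncomputable def vk (δ : ℝ) (k : ℕ) : ℝ :=
  ∫ x in (sk δ k)..(sk δ (k + 1)), x ^ 2 * Real.exp (-x)

section Delta
variable {δ : ℝ} (hδ : 0 < δ)

lemma sk_nonneg (k : ℕ) : 0 ≤ sk δ k := Real.sqrt_nonneg _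

lemma sk_zero : sk δ 0 = 0 := by simp [sk]

include hδ

lemma sq_sk (k : ℕ) : sk δ k ^ 2 = 2 * k * δ := by
  rw [sk, Real.sq_sqrt]
  positivity

lemma sk_mono (k : ℕ) : sk δ k ≤ sk δ (k + 1) := by
  apply Real.sqrt_le_sqrt
  push_cast
  nlinarith

lemma sk_le_mk (k : ℕ) : sk δ k ≤ mk' δ k := by
  apply Real.sqrt_le_sqrt
  nlinarith

lemma mk_le_sk (k : ℕ) : mk' δ k ≤ sk δ (k + 1) := by
  apply Real.sqrt_le_sqrt
  push_cast
  nlinarith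

lemma mk_pos (k : ℕ) : 0 < mk' δ k := by
  apply Real.sqrt_pos.2
  positivity

lemma sq_mk (k : ℕ) : mk' δ k ^ 2 = (2 * k + 1) * δ := by
  rw [mk', Real.sq_sqrt]; positivity

lemma vsum (N : ℕ) :
    ∑ k ∈ Finset.range N, vk δ k = ∫ x in (0:ℝ)..(sk δ N), x ^ 2 * Real.exp (-x) := by
  simp only [vk]
  rw [intervalIntegral.sum_integral_adjacent_intervals
    (fun k _ => (Continuous.intervalIntegrable (by continuity) _ _)), sk_zero]

lemma sk_tendsto : Tendsto (fun N => sk δ N) atTop atTop := by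
  have h1 : Tendsto Real.sqrt atTop atTop := by
    rw [show Real.sqrt = fun x : ℝ => x ^ (1/2:ℝ) from funext fun x => Real.sqrt_eq_rpow x]
    exact tendsto_rpow_atTop (by norm_num)
  apply h1.comp
  have h0 : Tendsto (fun N : ℕ => (N:ℝ)) atTop atTop := tendsto_natCast_atTop_atTop
  have h2 := (h0.const_mul_atTop (by norm_num : (0:ℝ) < 2)).atTop_mul_const hδ
  simpa [sk, mul_comm, mul_assoc] using h2

lemma vk_nonneg (k : ℕ) : 0 ≤ vk δ k :=
  intervalIntegral.integral_nonneg (sk_mono hδ k) (fun x _ => by positivity)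

lemma vsum_le (N : ℕ) : ∑ k ∈ Finset.range N, vk δ k ≤ 2 := by
  rw [vsum hδ, intervalIntegral.integral_of_le (sk_nonneg N), ← integral_sq_exp_Ioi]
  apply setIntegral_mono_set integrableOn_sq_exp
  · filter_upwards with x using by positivity
  · exact (Set.Ioc_subset_Ioi_self).eventuallyLE

lemma v_tsum : HasSum (vk δ) 2 := by
  rw [hasSum_iff_tendsto_nat_of_nonneg (vk_nonneg hδ)]
  simp only [vsum hδ]
  rw [← integral_sq_exp_Ioi]
  exact intervalIntegral_tendsto_integral_Ioi 0 integrableOn_sq_exp (sk_tendsto hδ)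

lemma uk_nonneg (k : ℕ) : 0 ≤ uk δ k := by
  unfold uk hfun
  have := (mk_pos hδ k).le
  positivity

lemma summable_u : Summable (uk δ) := by
  have hcomp : ∀ k : ℕ, uk δ k ≤ (3125 / δ) * (1 / ((k : ℝ) + 1) ^ 2) := by
    intro k
    have hm := mk_pos hδ k
    set m := mk' δ k with hmdef
    have h5 : m ^ 5 / 3125 ≤ Real.exp m := by
      have h1 : m / 5 + 1 ≤ Real.exp (m / 5) := Real.add_one_le_exp _
      have h2 : (m / 5) ^ 5 ≤ (Real.exp (m / 5)) ^ 5 :=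
        pow_le_pow_left₀ (by positivity) (by linarith) 5
      have h3 : Real.exp m = (Real.exp (m / 5)) ^ 5 := by
        rw [← Real.exp_nat_mul]; congr 1; push_cast; ring
      rw [h3]
      calc m ^ 5 / 3125 = (m / 5) ^ 5 := by ring
        _ ≤ _ := h2
    have hexp : Real.exp (-m) ≤ 3125 / m ^ 5 := by
      rw [Real.exp_neg, inv_eq_one_div, div_le_div_iff₀ (Real.exp_pos m) (by positivity)]
      nlinarith [Real.exp_pos m]
    have hm4 : m ^ 4 = ((2 * (k : ℝ) + 1) * δ) ^ 2 := by
      rw [show m ^ 4 = (m ^ 2) ^ 2 by ring, sq_mk hδ k]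
    have step1 : uk δ k ≤ δ * (m * (3125 / m ^ 5)) := by
      unfold uk hfun
      apply mul_le_mul_of_nonneg_left _ hδ.le
      exact mul_le_mul_of_nonneg_left hexp hm.le
    have step2 : δ * (m * (3125 / m ^ 5)) = 3125 * δ / m ^ 4 := by
      field_simp
    rw [step2, hm4] at step1
    refine step1.trans ?_
    have hk : ((k : ℝ) + 1) ^ 2 ≤ (2 * (k : ℝ) + 1) ^ 2 := by
      have : (0:ℝ) ≤ k := Nat.cast_nonneg k
      nlinarith
    have hrhs : 3125 / δ * (1 / ((k:ℝ) + 1) ^ 2) = 3125 / (δ * ((k:ℝ) + 1) ^ 2) := by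
      field_simp
    have hlhs : 3125 * δ / ((2 * (k:ℝ) + 1) * δ) ^ 2 = 3125 / ((2 * (k:ℝ) + 1) ^ 2 * δ) := by
      field_simp
    rw [hrhs, hlhs]
    apply div_le_div_of_nonneg_left (by norm_num) (by positivity)
    nlinarith [hδ.le]
  have hs2 : Summable (fun k : ℕ => (3125 / δ) * (1 / ((k : ℝ) + 1) ^ 2)) := by
    apply Summable.mul_left
    have h := summable_one_div_nat_pow.2 (le_refl 2)
    have h2 := (summable_nat_add_iff 1).2 h
    apply h2.congr
    intro n
    push_cast
    ring
  exact Summable.of_nonneg_of_le (uk_nonneg hδ) hcomp hs2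

lemma sk_mono' {k l : ℕ} (hkl : k ≤ l) : sk δ k ≤ sk δ l := by
  apply Real.sqrt_le_sqrt
  have : (k:ℝ) ≤ l := Nat.cast_le.2 hkl
  nlinarith

lemma err_bound (k : ℕ) :
    |uk δ k - vk δ k| ≤ δ * ((sk δ (k + 1) - sk δ k) * (2 * Real.exp (-(sk δ k) / 2))) := by
  set a := sk δ k with hadef
  set b := sk δ (k + 1) with hbdef
  set m := mk' δ k with hmdef
  have hab : a ≤ b := sk_mono hδ k
  have ha0 : 0 ≤ a := sk_nonneg k
  have hmem_m : m ∈ Set.Icc a b := ⟨sk_le_mk hδ k, mk_le_sk hδ k⟩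
  set C : ℝ := 2 * Real.exp (-a / 2) with hCdef
  have hC0 : 0 ≤ C := by positivity
  have hlip : ∀ x ∈ Set.Icc a b, |hfun m - hfun x| ≤ C * (b - a) := by
    intro x hx
    have hmvt := Convex.norm_image_sub_le_of_norm_deriv_le
      (f := hfun) (s := Set.Icc a b) (C := C)
      (fun y _ => (hfun_hasDerivAt y).differentiableAt)
      (fun y hy => by
        obtain ⟨hy1, hy2⟩ := hy
        rw [(hfun_hasDerivAt y).deriv]
        have hy0 : 0 ≤ y := le_trans ha0 hy1
        refine le_trans (abs_deriv_le hy0) ?_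
        have hmono : Real.exp (-y / 2) ≤ Real.exp (-a / 2) :=
          Real.exp_le_exp.2 (by linarith)
        rw [hCdef]
        linarith)
      (convex_Icc a b) hx hmem_m
    obtain ⟨hm1, hm2⟩ := hmem_m
    obtain ⟨hx1, hx2⟩ := hx
    have hdist : |m - x| ≤ b - a := by
      rw [abs_le]
      constructor
      · linarith
      · linarith
    calc |hfun m - hfun x| ≤ C * |m - x| := by simpa [Real.norm_eq_abs] using hmvt
      _ ≤ C * (b - a) := mul_le_mul_of_nonneg_left hdist hC0
  have hbsq : (b ^ 2 - a ^ 2) / 2 = δ := by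
    rw [hadef, hbdef, sq_sk hδ (k + 1), sq_sk hδ k]
    push_cast
    ring
  have hu : uk δ k = ∫ x in a..b, hfun m * x := by
    rw [intervalIntegral.integral_const_mul, integral_id, hbsq]
    rw [uk]
    ring
  have hint1 : IntervalIntegrable (fun x => hfun m * x) MeasureTheory.volume a b :=
    (Continuous.intervalIntegrable (by unfold hfun; continuity) _ _)
  have hint2 : IntervalIntegrable (fun x : ℝ => x ^ 2 * Real.exp (-x)) MeasureTheory.volume a b :=
    (Continuous.intervalIntegrable (by continuity) _ _)
  have hsub : uk δ k - vk δ k = ∫ x in a..b, (hfun m - hfun x) * x := by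
    rw [hu, vk, ← intervalIntegral.integral_sub hint1 hint2]
    congr 1
    funext x
    unfold hfun
    ring
  rw [hsub]
  have hgint : IntervalIntegrable (fun x : ℝ => (C * (b - a)) * x) MeasureTheory.volume a b :=
    (Continuous.intervalIntegrable (by continuity) _ _)
  have hbound := intervalIntegral.norm_integral_le_abs_of_norm_le
    (f := fun x => (hfun m - hfun x) * x) (g := fun x => (C * (b - a)) * x)
    (μ := MeasureTheory.volume) (a := a) (b := b) ?_ hgint
  · have hgval : (∫ x in a..b, (C * (b - a)) * x) = (C * (b - a)) * δ := by
      rw [intervalIntegral.integral_const_mul, integral_id, hbsq]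
    rw [hgval] at hbound
    have : |(C * (b - a)) * δ| = (C * (b - a)) * δ := by
      apply abs_of_nonneg
      have : 0 ≤ b - a := by linarith
      positivity
    rw [this] at hbound
    calc |∫ x in a..b, (hfun m - hfun x) * x| ≤ (C * (b - a)) * δ := by
          simpa [Real.norm_eq_abs] using hbound
      _ = δ * ((b - a) * C) := by ring
  · rw [MeasureTheory.ae_restrict_iff' measurableSet_uIoc]
    refine Filter.Eventually.of_forall (fun x hx => ?_)
    have hxIcc : x ∈ Set.Icc a b := by
      rw [Set.uIoc_of_le hab] at hx
      exact ⟨hx.1.le, hx.2⟩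
    have hx0 : 0 ≤ x := le_trans ha0 hxIcc.1
    rw [Real.norm_eq_abs, abs_mul, abs_of_nonneg hx0]
    exact mul_le_mul_of_nonneg_right (hlip x hxIcc) hx0

lemma wk_anti (k : ℕ) : sk δ (k + 2) - sk δ (k + 1) ≤ sk δ (k + 1) - sk δ k := by
  set x := sk δ k
  set y := sk δ (k + 1)
  set z := sk δ (k + 2)
  have hx : x ^ 2 = 2 * k * δ := sq_sk hδ k
  have hy : y ^ 2 = 2 * k * δ + 2 * δ := by
    rw [sq_sk hδ (k + 1)]; push_cast; ring
  have hz : z ^ 2 = 2 * k * δ + 4 * δ := by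
    rw [sq_sk hδ (k + 2)]; push_cast; ring
  have hx0 : 0 ≤ x := sk_nonneg k
  have hy0 : 0 ≤ y := sk_nonneg (k + 1)
  have hz0 : 0 ≤ z := sk_nonneg (k + 2)
  have hsq : (x + z) ^ 2 ≤ (2 * y) ^ 2 := by nlinarith [sq_nonneg (x - z)]
  have := le_of_pow_le_pow_left₀ (two_ne_zero) (by positivity : (0:ℝ) ≤ 2 * y) hsq
  linarith

omit hδ in
lemma int_two_exp_half {a b : ℝ} (hab : a ≤ b) (ha : 0 ≤ a) :
    ∫ x in a..b, 2 * Real.exp (-x / 2) ≤ 4 := by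
  have F : ∀ x : ℝ, HasDerivAt (fun y : ℝ => -4 * Real.exp (-y / 2)) (2 * Real.exp (-x / 2)) x := by
    intro x
    have h1 : HasDerivAt (fun y : ℝ => -y / 2) (-(1:ℝ) / 2) x := by
      simpa using ((hasDerivAt_id x).neg.div_const 2)
    have h2 := (Real.hasDerivAt_exp (-x / 2)).comp x h1
    have h3 := h2.const_mul (-4 : ℝ)
    refine h3.congr_deriv ?_
    ring
  rw [intervalIntegral.integral_eq_sub_of_hasDerivAt (fun x _ => F x)
    ((Continuous.intervalIntegrable (by continuity) _ _))]
  have e1 : 0 < Real.exp (-b / 2) := Real.exp_pos _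
  have e2 : Real.exp (-a / 2) ≤ 1 := Real.exp_le_one_iff.2 (by linarith)
  linarith

lemma errsum (N : ℕ) :
    ∑ k ∈ Finset.range N, ((sk δ (k + 1) - sk δ k) * (2 * Real.exp (-(sk δ k) / 2)))
      ≤ 2 * sk δ 1 + 4 := by
  cases N with
  | zero =>
    simp
    have := sk_nonneg (δ := δ) 1
    positivity
  | succ M =>
    rw [Finset.sum_range_succ']
    have h0 : (sk δ (0 + 1) - sk δ 0) * (2 * Real.exp (-(sk δ 0) / 2)) = 2 * sk δ 1 := by
      rw [sk_zero]
      norm_num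
      ring
    have hshift : ∑ k ∈ Finset.range M,
        ((sk δ (k + 1 + 1) - sk δ (k + 1)) * (2 * Real.exp (-(sk δ (k + 1)) / 2)))
        ≤ 4 := by
      have step1 : ∑ k ∈ Finset.range M,
          ((sk δ (k + 1 + 1) - sk δ (k + 1)) * (2 * Real.exp (-(sk δ (k + 1)) / 2)))
          ≤ ∑ k ∈ Finset.range M, ∫ x in (sk δ k)..(sk δ (k + 1)), 2 * Real.exp (-x / 2) := by
        apply Finset.sum_le_sum
        intro k _
        have hterm : (sk δ (k + 1 + 1) - sk δ (k + 1)) * (2 * Real.exp (-(sk δ (k + 1)) / 2))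
            ≤ (sk δ (k + 1) - sk δ k) * (2 * Real.exp (-(sk δ (k + 1)) / 2)) :=
          mul_le_mul_of_nonneg_right (wk_anti hδ k) (by positivity)
        refine hterm.trans ?_
        have hconst : (sk δ (k + 1) - sk δ k) * (2 * Real.exp (-(sk δ (k + 1)) / 2))
            = ∫ _x in (sk δ k)..(sk δ (k + 1)), (2 * Real.exp (-(sk δ (k + 1)) / 2)) := by
          rw [intervalIntegral.integral_const, smul_eq_mul]
        rw [hconst]
        apply intervalIntegral.integral_mono_on (sk_mono hδ k)
          (intervalIntegrable_const)
          (Continuous.intervalIntegrable (by continuity) _ _)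
        intro x hx
        have hxle : x ≤ sk δ (k + 1) := hx.2
        have : Real.exp (-(sk δ (k + 1)) / 2) ≤ Real.exp (-x / 2) :=
          Real.exp_le_exp.2 (by linarith)
        linarith
      have step2 : ∑ k ∈ Finset.range M, (∫ x in (sk δ k)..(sk δ (k + 1)), 2 * Real.exp (-x / 2))
          = ∫ x in (sk δ 0)..(sk δ M), 2 * Real.exp (-x / 2) :=
        intervalIntegral.sum_integral_adjacent_intervals
          (fun k _ => Continuous.intervalIntegrable (by continuity) _ _)
      rw [step2] at step1
      refine step1.trans (int_two_exp_half (sk_mono' hδ (Nat.zero_le M)) ?_)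
      rw [sk_zero]
    calc ∑ k ∈ Finset.range M,
          ((sk δ (k + 1 + 1) - sk δ (k + 1)) * (2 * Real.exp (-(sk δ (k + 1)) / 2)))
          + (sk δ (0 + 1) - sk δ 0) * (2 * Real.exp (-(sk δ 0) / 2))
        ≤ 4 + 2 * sk δ 1 := by rw [h0]; linarith
      _ = 2 * sk δ 1 + 4 := by ring

lemma key : |(∑' k : ℕ, uk δ k) - 2| ≤ δ * (2 * sk δ 1 + 4) := by
  have hv := v_tsum hδ
  have hsv : Summable (vk δ) := hv.summable
  have hsu := summable_u hδ
  have hsub : Summable (fun k => uk δ k - vk δ k) := hsu.sub hsv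
  have h2 : (∑' k : ℕ, uk δ k) - 2 = ∑' k : ℕ, (uk δ k - vk δ k) := by
    rw [Summable.tsum_sub hsu hsv, hv.tsum_eq]
  rw [h2]
  have habs : |∑' k : ℕ, (uk δ k - vk δ k)| ≤ ∑' k : ℕ, |uk δ k - vk δ k| := by
    simpa [Real.norm_eq_abs] using
      norm_tsum_le_tsum_norm (f := fun k => uk δ k - vk δ k) (by simpa [Real.norm_eq_abs] using hsub.abs)
  refine habs.trans ?_
  apply Real.tsum_le_of_sum_range_le (fun n => abs_nonneg _)
  intro N
  calc ∑ k ∈ Finset.range N, |uk δ k - vk δ k|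
      ≤ ∑ k ∈ Finset.range N, δ * ((sk δ (k + 1) - sk δ k) * (2 * Real.exp (-(sk δ k) / 2))) :=
        Finset.sum_le_sum (fun k _ => err_bound hδ k)
    _ = δ * ∑ k ∈ Finset.range N, ((sk δ (k + 1) - sk δ k) * (2 * Real.exp (-(sk δ k) / 2))) := by
        rw [Finset.mul_sum]
    _ ≤ δ * (2 * sk δ 1 + 4) := mul_le_mul_of_nonneg_left (errsum hδ N) hδ.le

end Delta

/-- For `λ > 0`, the sum over odd `n` satisfies
`Σ_{n odd} √n e^(-λ√n) ~ 2/λ³` as `λ → 0⁺`, i.e. with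
`S(λ) = Σ_{k≥0} √(2k+1) e^(-λ√(2k+1))` one has `λ³ S(λ) → 2`. -/
theorem odd_sum_asymptotics :
    Tendsto
      (fun lam : ℝ =>
        lam ^ 3 *
          ∑' k : ℕ, Real.sqrt (2 * (k : ℝ) + 1) * Real.exp (-lam * Real.sqrt (2 * (k : ℝ) + 1)))
      (nhdsWithin 0 (Set.Ioi 0)) (nhds 2) := by
  set f : ℝ → ℝ := fun lam =>
    lam ^ 3 * ∑' k : ℕ, Real.sqrt (2 * (k : ℝ) + 1) * Real.exp (-lam * Real.sqrt (2 * (k : ℝ) + 1))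
    with hfdef
  have hbound : ∀ lam : ℝ, lam ∈ Set.Ioi (0:ℝ) →
      |f lam - 2| ≤ lam ^ 2 * (2 * (Real.sqrt 2 * lam) + 4) := by
    intro lam hl
    rw [Set.mem_Ioi] at hl
    have hδ : 0 < lam ^ 2 := by positivity
    have hrw : f lam = ∑' k : ℕ, uk (lam ^ 2) k := by
      rw [hfdef]
      simp only
      rw [← tsum_mul_left]
      congr 1
      funext k
      have hs : Real.sqrt ((2 * (k:ℝ) + 1) * lam ^ 2) = Real.sqrt (2 * (k:ℝ) + 1) * lam := by
        rw [Real.sqrt_mul (by positivity), Real.sqrt_sq hl.le]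
      rw [uk, mk', hs, hfun]
      rw [show -(Real.sqrt (2 * (k:ℝ) + 1) * lam) = -lam * Real.sqrt (2 * (k:ℝ) + 1) by ring]
      ring
    have hsk1 : sk (lam ^ 2) 1 = Real.sqrt 2 * lam := by
      rw [sk]
      push_cast
      rw [show 2 * (1:ℝ) * lam ^ 2 = 2 * lam ^ 2 by ring,
        Real.sqrt_mul (by norm_num), Real.sqrt_sq hl.le]
    have hk := key hδ
    rw [hsk1] at hk
    rw [hrw]
    exact hk
  have hg : Tendsto (fun lam : ℝ => lam ^ 2 * (2 * (Real.sqrt 2 * lam) + 4))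
      (nhdsWithin 0 (Set.Ioi 0)) (nhds 0) := by
    have hc : Continuous (fun lam : ℝ => lam ^ 2 * (2 * (Real.sqrt 2 * lam) + 4)) := by
      continuity
    have := hc.tendsto 0
    simp only [ne_eq, OfNat.ofNat_ne_zero, not_false_eq_true, zero_pow, zero_mul] at this
    exact this.mono_left nhdsWithin_le_nhds
  have h1 : Tendsto (fun lam => f lam - 2) (nhdsWithin 0 (Set.Ioi 0)) (nhds 0) := by
    apply squeeze_zero_norm' _ hg
    filter_upwards [eventually_mem_nhdsWithin] with lam hlam
    simpa [Real.norm_eq_abs] using hbound lam hlam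
  have := h1.add (tendsto_const_nhds (x := (2:ℝ)))
  simpa using this
end

section
/- The power-series/integral interchange Σ_{n≥1} ((-y²)(1-t)(1-u))^n / n! = e^{-y²(1-t)(1-u)} - 1 yields, for a = y² + λy > 0, the identity Σ_{n≥1} (-y²)^n J_n(y,-λy)² / n! = ∫₀¹∫₀¹ (ut)^{a-1} e^{y²(2-t-u)} (e^{-y²(1-t)(1-u)} - 1) du dt, where J_n(y,-λy) = ∫₀¹ t^{a-1} e^{(1-t)y²}(1-t)^n dt. -/
open MeasureTheory Real

lemma exp_sub_one_eq_tsum' (x : ℝ) :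
    Real.exp x - 1 = ∑' n : ℕ, x ^ (n + 1) / ((n + 1).factorial : ℝ) := by
  have hs := Real.summable_pow_div_factorial x
  have h0 : Real.exp x = ∑' n : ℕ, x ^ n / (n.factorial : ℝ) := by
    rw [Real.exp_eq_exp_ℝ, NormedSpace.exp_eq_tsum_div]
  rw [h0, Summable.tsum_eq_zero_add hs]
  simp

lemma summable_shifted (x C : ℝ) :
    Summable (fun n : ℕ => x ^ (n + 1) / ((n + 1).factorial : ℝ) * C) :=
  (((summable_nat_add_iff 1).2 (Real.summable_pow_div_factorial x))).mul_right C

/-- With `a = y² + λy > 0` and `J_n = ∫₀¹ t^(a-1) e^((1-t)y²) (1-t)^n dt`, the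
series `Σ_{n≥1} (-y²)^n J_n² / n!` converges absolutely and equals the double
integral `∬₀¹ (ut)^(a-1) e^(y²(2-t-u)) (e^(-y²(1-t)(1-u)) - 1) du dt`, obtained
by expanding the exponential series under the integral sign. -/
theorem series_double_integral_identity (y lam : ℝ) (hy : 0 < y)
    (ha : 0 < y ^ 2 + lam * y)
    (J : ℕ → ℝ)
    (hJ : ∀ m : ℕ, J m =
      ∫ t in Set.Ioo (0 : ℝ) 1,
        t ^ (y ^ 2 + lam * y - 1) * Real.exp ((1 - t) * y ^ 2) * (1 - t) ^ m) :
    Summable (fun n : ℕ => (-y ^ 2) ^ (n + 1) * (J (n + 1)) ^ 2 / ((n + 1).factorial : ℝ)) ∧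
    (∑' n : ℕ, (-y ^ 2) ^ (n + 1) * (J (n + 1)) ^ 2 / ((n + 1).factorial : ℝ)) =
      ∫ t in Set.Ioo (0 : ℝ) 1, ∫ u in Set.Ioo (0 : ℝ) 1,
        (u * t) ^ (y ^ 2 + lam * y - 1) * Real.exp (y ^ 2 * (2 - t - u)) *
          (Real.exp (-(y ^ 2 * (1 - t) * (1 - u))) - 1) := by
  set a : ℝ := y ^ 2 + lam * y with ha_def
  set f : ℝ → ℝ := fun t => t ^ (a - 1) * Real.exp ((1 - t) * y ^ 2) with hf_def
  have hf_meas : Measurable f := by fun_prop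
  have hf_nonneg : ∀ t ∈ Set.Ioo (0:ℝ) 1, 0 ≤ f t := fun t ht =>
    mul_nonneg (Real.rpow_nonneg ht.1.le _) (Real.exp_pos _).le
  have hrpow : IntegrableOn (fun t : ℝ => t ^ (a - 1)) (Set.Ioo 0 1) := by
    have h := intervalIntegral.intervalIntegrable_rpow' (a := 0) (b := 1) (r := a - 1)
      (by linarith)
    rw [intervalIntegrable_iff, Set.uIoc_of_le (by norm_num)] at h
    exact h.mono_set Set.Ioo_subset_Ioc_self
  have hf_int : IntegrableOn f (Set.Ioo 0 1) := by
    apply Integrable.mono' (hrpow.mul_const (Real.exp (y ^ 2)))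
      hf_meas.aestronglyMeasurable.restrict
    filter_upwards [ae_restrict_mem measurableSet_Ioo] with t ht
    have h1 : (0:ℝ) ≤ t ^ (a - 1) := Real.rpow_nonneg ht.1.le _
    have h2 : Real.exp ((1 - t) * y ^ 2) ≤ Real.exp (y ^ 2) := by
      apply Real.exp_le_exp.2; nlinarith [sq_nonneg y, ht.1]
    rw [Real.norm_eq_abs, abs_mul, abs_of_nonneg h1, abs_of_nonneg (Real.exp_pos _).le]
    exact mul_le_mul_of_nonneg_left h2 h1
  -- integrability of f * (1-t)^m
  have habs : ∀ m : ℕ, ∀ t ∈ Set.Ioo (0:ℝ) 1, |f t * (1 - t) ^ m| ≤ f t := by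
    intro m t ht
    rw [abs_mul, abs_of_nonneg (hf_nonneg t ht)]
    have h1 : |(1 - t) ^ m| ≤ 1 := by
      rw [abs_pow]
      exact pow_le_one₀ (abs_nonneg _) (by rw [abs_of_nonneg (by linarith [ht.2])]; linarith [ht.1])
    calc f t * |(1 - t) ^ m| ≤ f t * 1 :=
          mul_le_mul_of_nonneg_left h1 (hf_nonneg t ht)
      _ = f t := mul_one _
  have h_intm : ∀ m : ℕ, IntegrableOn (fun t => f t * (1 - t) ^ m) (Set.Ioo 0 1) := by
    intro m
    apply Integrable.mono' hf_int
    · exact (hf_meas.mul (by fun_prop)).aestronglyMeasurable.restrict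
    · filter_upwards [ae_restrict_mem measurableSet_Ioo] with t ht
      exact habs m t ht
  have hJ' : ∀ m : ℕ, J m = ∫ t in Set.Ioo (0:ℝ) 1, f t * (1 - t) ^ m := fun m => hJ m
  set K0 : ℝ := ∫ t in Set.Ioo (0:ℝ) 1, f t with hK0_def
  have hK0 : 0 ≤ K0 := setIntegral_nonneg measurableSet_Ioo hf_nonneg
  have h_normint : ∀ m : ℕ,
      (∫ t in Set.Ioo (0:ℝ) 1, |f t * (1 - t) ^ m|) ≤ K0 := by
    intro m
    apply setIntegral_mono_on (h_intm m).abs hf_int measurableSet_Ioo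
    intro t ht; exact habs m t ht
  have hJb : ∀ m : ℕ, |J m| ≤ K0 := by
    intro m
    rw [hJ' m]
    calc |∫ t in Set.Ioo (0:ℝ) 1, f t * (1 - t) ^ m|
        ≤ ∫ t in Set.Ioo (0:ℝ) 1, |f t * (1 - t) ^ m| := by
          rw [← Real.norm_eq_abs]
          exact (norm_integral_le_integral_norm (fun t => f t * (1 - t) ^ m)
            (μ := volume.restrict (Set.Ioo (0:ℝ) 1)))
      _ ≤ K0 := h_normint m
  -- Summability of the LHS series
  have hsum : Summable (fun n : ℕ =>
      (-y ^ 2) ^ (n + 1) * (J (n + 1)) ^ 2 / ((n + 1).factorial : ℝ)) := by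
    apply Summable.of_norm_bounded (summable_shifted (y ^ 2) (K0 ^ 2))
    intro n
    rw [Real.norm_eq_abs, abs_div, abs_mul, abs_pow, abs_neg,
      abs_of_nonneg (sq_nonneg y), abs_of_nonneg (sq_nonneg (J (n+1))),
      abs_of_nonneg (Nat.cast_nonneg _), div_mul_eq_mul_div]
    apply div_le_div_of_nonneg_right ?_ (by positivity)
    have h2 : (J (n+1)) ^ 2 ≤ K0 ^ 2 := by
      rw [← sq_abs (J (n+1))]
      exact pow_le_pow_left₀ (abs_nonneg _) (hJb _) 2
    exact mul_le_mul_of_nonneg_left h2 (by positivity)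
  refine ⟨hsum, ?_⟩
  -- the inner integral, for fixed t ∈ (0,1)
  have inner_eq : ∀ t ∈ Set.Ioo (0:ℝ) 1,
      (∫ u in Set.Ioo (0:ℝ) 1,
        (u * t) ^ (a - 1) * Real.exp (y ^ 2 * (2 - t - u)) *
          (Real.exp (-(y ^ 2 * (1 - t) * (1 - u))) - 1))
      = ∑' n : ℕ, ((-y ^ 2) ^ (n + 1) / ((n + 1).factorial : ℝ) * J (n + 1)) *
          (f t * (1 - t) ^ (n + 1)) := by
    intro t ht
    have hptwise : Set.EqOn
        (fun u => (u * t) ^ (a - 1) * Real.exp (y ^ 2 * (2 - t - u)) *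
          (Real.exp (-(y ^ 2 * (1 - t) * (1 - u))) - 1))
        (fun u => ∑' n : ℕ,
          ((-y ^ 2) ^ (n + 1) / ((n + 1).factorial : ℝ) * (1 - t) ^ (n + 1) * f t) *
            (f u * (1 - u) ^ (n + 1)))
        (Set.Ioo 0 1) := by
      intro u hu
      simp only
      rw [Real.mul_rpow hu.1.le ht.1.le,
        show y ^ 2 * (2 - t - u) = (1 - t) * y ^ 2 + (1 - u) * y ^ 2 from by ring,
        Real.exp_add, exp_sub_one_eq_tsum' (-(y ^ 2 * (1 - t) * (1 - u))), ← tsum_mul_left]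
      apply tsum_congr; intro n
      rw [show -(y ^ 2 * (1 - t) * (1 - u)) = (-y ^ 2) * ((1 - t) * (1 - u)) from by ring,
        mul_pow, mul_pow]
      simp only [hf_def]
      ring
    have hFint : ∀ n : ℕ, Integrable
        (fun u => ((-y ^ 2) ^ (n + 1) / ((n + 1).factorial : ℝ) * (1 - t) ^ (n + 1) * f t) *
          (f u * (1 - u) ^ (n + 1))) (volume.restrict (Set.Ioo (0:ℝ) 1)) :=
      fun n => (h_intm (n + 1)).const_mul _
    have hCbound : ∀ n : ℕ,
        |(-y ^ 2) ^ (n + 1) / ((n + 1).factorial : ℝ) * (1 - t) ^ (n + 1) * f t|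
          ≤ (y ^ 2) ^ (n + 1) / ((n + 1).factorial : ℝ) * f t := by
      intro n
      rw [abs_mul, abs_mul, abs_div, abs_pow, abs_neg, abs_of_nonneg (sq_nonneg y),
        abs_of_nonneg (Nat.cast_nonneg _), abs_of_nonneg (hf_nonneg t ht), abs_pow]
      have h1 : |1 - t| ^ (n + 1) ≤ 1 :=
        pow_le_one₀ (abs_nonneg _)
          (by rw [abs_of_nonneg (by linarith [ht.2])]; linarith [ht.1])
      calc (y ^ 2) ^ (n + 1) / ((n + 1).factorial : ℝ) * |1 - t| ^ (n + 1) * f t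
          ≤ (y ^ 2) ^ (n + 1) / ((n + 1).factorial : ℝ) * 1 * f t := by
            apply mul_le_mul_of_nonneg_right _ (hf_nonneg t ht)
            exact mul_le_mul_of_nonneg_left h1 (by positivity)
        _ = (y ^ 2) ^ (n + 1) / ((n + 1).factorial : ℝ) * f t := by ring
    have hFsum : Summable (fun n : ℕ => ∫ u in Set.Ioo (0:ℝ) 1,
        ‖((-y ^ 2) ^ (n + 1) / ((n + 1).factorial : ℝ) * (1 - t) ^ (n + 1) * f t) *
          (f u * (1 - u) ^ (n + 1))‖) := by
      apply Summable.of_nonneg_of_le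
        (fun n => integral_nonneg fun u => norm_nonneg _) ?_
        (summable_shifted (y ^ 2) (f t * K0))
      intro n
      have heq : (∫ u in Set.Ioo (0:ℝ) 1,
          ‖((-y ^ 2) ^ (n + 1) / ((n + 1).factorial : ℝ) * (1 - t) ^ (n + 1) * f t) *
            (f u * (1 - u) ^ (n + 1))‖)
          = |(-y ^ 2) ^ (n + 1) / ((n + 1).factorial : ℝ) * (1 - t) ^ (n + 1) * f t| *
            ∫ u in Set.Ioo (0:ℝ) 1, |f u * (1 - u) ^ (n + 1)| := by
        rw [← integral_const_mul]
        exact integral_congr_ae (Filter.Eventually.of_forall fun u => by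
          beta_reduce
          rw [norm_mul, Real.norm_eq_abs, Real.norm_eq_abs])
      rw [heq]
      calc |(-y ^ 2) ^ (n + 1) / ((n + 1).factorial : ℝ) * (1 - t) ^ (n + 1) * f t| *
            ∫ u in Set.Ioo (0:ℝ) 1, |f u * (1 - u) ^ (n + 1)|
          ≤ ((y ^ 2) ^ (n + 1) / ((n + 1).factorial : ℝ) * f t) * K0 :=
            mul_le_mul (hCbound n) (h_normint (n + 1))
              (integral_nonneg fun u => abs_nonneg _)
              (mul_nonneg (by positivity) (hf_nonneg t ht))
        _ = (y ^ 2) ^ (n + 1) / ((n + 1).factorial : ℝ) * (f t * K0) := by ring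
    rw [setIntegral_congr_fun measurableSet_Ioo hptwise,
      ← integral_tsum_of_summable_integral_norm hFint hFsum]
    apply tsum_congr; intro n
    rw [integral_const_mul, ← hJ' (n + 1)]
    ring
  -- outer swap
  have hGint : ∀ n : ℕ, Integrable
      (fun t => ((-y ^ 2) ^ (n + 1) / ((n + 1).factorial : ℝ) * J (n + 1)) *
        (f t * (1 - t) ^ (n + 1))) (volume.restrict (Set.Ioo (0:ℝ) 1)) :=
    fun n => (h_intm (n + 1)).const_mul _
  have hGsum : Summable (fun n : ℕ => ∫ t in Set.Ioo (0:ℝ) 1,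
      ‖((-y ^ 2) ^ (n + 1) / ((n + 1).factorial : ℝ) * J (n + 1)) *
        (f t * (1 - t) ^ (n + 1))‖) := by
    apply Summable.of_nonneg_of_le
      (fun n => integral_nonneg fun t => norm_nonneg _) ?_
      (summable_shifted (y ^ 2) (K0 * K0))
    intro n
    have heq : (∫ t in Set.Ioo (0:ℝ) 1,
        ‖((-y ^ 2) ^ (n + 1) / ((n + 1).factorial : ℝ) * J (n + 1)) *
          (f t * (1 - t) ^ (n + 1))‖)
        = |(-y ^ 2) ^ (n + 1) / ((n + 1).factorial : ℝ) * J (n + 1)| *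
          ∫ t in Set.Ioo (0:ℝ) 1, |f t * (1 - t) ^ (n + 1)| := by
      rw [← integral_const_mul]
      exact integral_congr_ae (Filter.Eventually.of_forall fun t => by
        beta_reduce
        rw [norm_mul, Real.norm_eq_abs, Real.norm_eq_abs])
    rw [heq]
    have hC : |(-y ^ 2) ^ (n + 1) / ((n + 1).factorial : ℝ) * J (n + 1)|
        ≤ (y ^ 2) ^ (n + 1) / ((n + 1).factorial : ℝ) * K0 := by
      rw [abs_mul, abs_div, abs_pow, abs_neg, abs_of_nonneg (sq_nonneg y),
        abs_of_nonneg (Nat.cast_nonneg _)]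
      exact mul_le_mul_of_nonneg_left (hJb (n + 1)) (by positivity)
    calc |(-y ^ 2) ^ (n + 1) / ((n + 1).factorial : ℝ) * J (n + 1)| *
          ∫ t in Set.Ioo (0:ℝ) 1, |f t * (1 - t) ^ (n + 1)|
        ≤ ((y ^ 2) ^ (n + 1) / ((n + 1).factorial : ℝ) * K0) * K0 :=
          mul_le_mul hC (h_normint (n + 1))
            (integral_nonneg fun t => abs_nonneg _) (by positivity)
      _ = (y ^ 2) ^ (n + 1) / ((n + 1).factorial : ℝ) * (K0 * K0) := by ring
  have h1 : (∫ t in Set.Ioo (0:ℝ) 1, ∫ u in Set.Ioo (0:ℝ) 1,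
      (u * t) ^ (a - 1) * Real.exp (y ^ 2 * (2 - t - u)) *
        (Real.exp (-(y ^ 2 * (1 - t) * (1 - u))) - 1))
      = ∫ t in Set.Ioo (0:ℝ) 1, ∑' n : ℕ,
        ((-y ^ 2) ^ (n + 1) / ((n + 1).factorial : ℝ) * J (n + 1)) *
          (f t * (1 - t) ^ (n + 1)) :=
    setIntegral_congr_fun measurableSet_Ioo (fun t ht => inner_eq t ht)
  rw [h1, ← integral_tsum_of_summable_integral_norm hGint hGsum]
  apply tsum_congr; intro n
  rw [integral_const_mul, ← hJ' (n + 1)]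
  ring
end

section
/- With a = y² + λy > 0 and J_n = ∫₀¹ t^{a-1} e^{(1-t)y²}(1-t)^n dt, one has the identity Σ_{n≥1} (-y²)^n J_n²/n! = Σ_{n≥1} J_n/n - J_0². -/
open MeasureTheory Real Set
open scoped ENNReal NNReal

lemma rpowIntOn {r : ℝ} (hr : -1 < r) :
    IntegrableOn (fun u : ℝ => u ^ r) (Set.Ioo 0 1) := by
  have h := intervalIntegral.intervalIntegrable_rpow' (a := 0) (b := 1) hr
  rwa [intervalIntegrable_iff_integrableOn_Ioo_of_le zero_le_one] at h

lemma neg_log_le_aux {a : ℝ} (ha : 0 < a) {u : ℝ} (hu : 0 < u) :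
    -Real.log u ≤ (2 / a) * u ^ (-(a / 2)) := by
  have hv : 0 < u ^ (a / 2) := Real.rpow_pos_of_pos hu _
  have h2 : -Real.log (u ^ (a / 2)) ≤ (u ^ (a / 2))⁻¹ := by
    have := Real.log_le_sub_one_of_pos (inv_pos.mpr hv)
    rw [Real.log_inv] at this
    have : -Real.log (u ^ (a/2)) ≤ (u ^ (a/2))⁻¹ - 1 := by linarith
    linarith
  have h1 : -Real.log u = (2 / a) * (-Real.log (u ^ (a / 2))) := by
    rw [Real.log_rpow hu]; field_simp
  rw [h1, Real.rpow_neg hu.le]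
  have hc : (0:ℝ) ≤ 2 / a := by positivity
  exact mul_le_mul_of_nonneg_left h2 hc

lemma exp_tsum_div (x : ℝ) : ∑' n : ℕ, x ^ n / (n.factorial : ℝ) = Real.exp x := by
  rw [Real.exp_eq_exp_ℝ, NormedSpace.exp_eq_tsum_div]

lemma hasSum_exp_div (x : ℝ) : HasSum (fun n : ℕ => x ^ n / (n.factorial : ℝ)) (Real.exp x) := by
  have h := (Real.summable_pow_div_factorial x).hasSum
  rwa [exp_tsum_div x] at h

set_option maxHeartbeats 2000000 in
/-- With `a = y² + λy > 0` and `J_n = ∫₀¹ t^(a-1) e^((1-t)y²) (1-t)^n dt`, one has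
`Σ_{n≥1} (-y²)^n J_n²/n! + J₀² = Σ_{n≥1} J_n/n`. -/
theorem series_identity_Jn (y lam : ℝ) (hy : 0 < y) (ha : 0 < y ^ 2 + lam * y)
    (J : ℕ → ℝ)
    (hJ : ∀ m : ℕ, J m =
      ∫ t in Set.Ioo (0 : ℝ) 1,
        t ^ (y ^ 2 + lam * y - 1) * Real.exp ((1 - t) * y ^ 2) * (1 - t) ^ m) :
    (∑' n : ℕ, (-y ^ 2) ^ (n + 1) * (J (n + 1)) ^ 2 / ((n + 1).factorial : ℝ)) + (J 0) ^ 2 =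
      ∑' n : ℕ, J (n + 1) / ((n : ℝ) + 1) := by
  set a : ℝ := y ^ 2 + lam * y with ha_def
  set b : ℝ := y ^ 2 with hb_def
  have hb : 0 < b := by positivity
  set μ : Measure ℝ := volume.restrict (Set.Ioo (0:ℝ) 1) with hμ_def
  set f : ℕ → ℝ → ℝ := fun m t => t ^ (a - 1) * Real.exp ((1 - t) * b) * (1 - t) ^ m with hf_def
  set g : ℝ → ℝ := fun u => u ^ (a - 1) * Real.exp ((1 - u) * b) with hg_def
  have ha1 : (-1:ℝ) < a - 1 := by linarith
  have ha2 : (-1:ℝ) < a / 2 - 1 := by linarith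
  have hJ' : ∀ m, J m = ∫ t, f m t ∂μ := by
    intro m; rw [hJ m]
  have hg_meas : Measurable g := by simp only [hg_def]; fun_prop
  have hf_meas : ∀ m, Measurable (f m) := by intro m; simp only [hf_def]; fun_prop
  have hf_nn : ∀ m, ∀ t ∈ Set.Ioo (0:ℝ) 1, 0 ≤ f m t := by
    intro m t ht
    have h1 : (0:ℝ) ≤ t ^ (a-1) := Real.rpow_nonneg ht.1.le _
    have h2 : (0:ℝ) ≤ (1 - t) ^ m := pow_nonneg (by linarith [ht.2]) m
    exact mul_nonneg (mul_nonneg h1 (Real.exp_nonneg _)) h2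
  have hg_nn : ∀ u ∈ Set.Ioo (0:ℝ) 1, 0 ≤ g u := by
    intro u hu
    exact mul_nonneg (Real.rpow_nonneg hu.1.le _) (Real.exp_nonneg _)
  have hf_int : ∀ m, Integrable (f m) μ := by
    intro m
    have hdom : Integrable (fun u : ℝ => Real.exp b * u ^ (a-1)) μ := (rpowIntOn ha1).const_mul _
    apply hdom.mono ((hf_meas m).aestronglyMeasurable)
    rw [hμ_def]
    filter_upwards [ae_restrict_mem measurableSet_Ioo] with t ht
    rw [Real.norm_eq_abs, abs_of_nonneg (hf_nn m t ht), Real.norm_eq_abs]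
    have h1 : (0:ℝ) ≤ t ^ (a-1) := Real.rpow_nonneg ht.1.le _
    have hexp : Real.exp ((1-t)*b) ≤ Real.exp b := by
      apply Real.exp_le_exp.mpr; nlinarith [ht.1, ht.2]
    have hpow : (1-t)^m ≤ 1 := pow_le_one₀ (by linarith [ht.2]) (by linarith [ht.1])
    rw [abs_of_nonneg (mul_nonneg (Real.exp_nonneg _) h1)]
    simp only [hf_def]
    calc t ^ (a-1) * Real.exp ((1-t)*b) * (1-t)^m
        ≤ t^(a-1) * Real.exp b * 1 := by
          apply mul_le_mul (mul_le_mul_of_nonneg_left hexp h1) hpow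
            (pow_nonneg (by linarith [ht.2]) m) (mul_nonneg h1 (Real.exp_nonneg _))
      _ = Real.exp b * t^(a-1) := by ring
  have hg_int : Integrable g μ := by
    have h0 := hf_int 0
    have hfg : f 0 = g := by funext t; simp [hf_def, hg_def]
    rwa [hfg] at h0
  have hJnn : ∀ m, 0 ≤ J m := by
    intro m; rw [hJ' m]
    apply integral_nonneg_of_ae
    rw [hμ_def]
    filter_upwards [ae_restrict_mem measurableSet_Ioo] with t ht using hf_nn m t ht
  have hJle : ∀ m, J m ≤ J 0 := by
    intro m; rw [hJ' m, hJ' 0]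
    apply integral_mono_ae (hf_int m) (hf_int 0)
    rw [hμ_def]
    filter_upwards [ae_restrict_mem measurableSet_Ioo] with t ht
    simp only [hf_def, pow_zero, mul_one]
    have h1 : (0:ℝ) ≤ t ^ (a-1) * Real.exp ((1-t)*b) :=
      mul_nonneg (Real.rpow_nonneg ht.1.le _) (Real.exp_nonneg _)
    have hpow : (1-t)^m ≤ 1 := pow_le_one₀ (by linarith [ht.2]) (by linarith [ht.1])
    calc t^(a-1) * Real.exp ((1-t)*b) * (1-t)^m
        ≤ t^(a-1) * Real.exp ((1-t)*b) * 1 := mul_le_mul_of_nonneg_left hpow h1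
      _ = t^(a-1) * Real.exp ((1-t)*b) := mul_one _
  have hlog : ∀ t ∈ Set.Ioo (0:ℝ) 1,
      HasSum (fun n : ℕ => f (n+1) t / ((n:ℝ)+1)) (g t * (-Real.log t)) := by
    intro t ht
    have habs : |1 - t| < 1 := by
      rw [abs_lt]; constructor
      · linarith [ht.2]
      · linarith [ht.1]
    have h := (Real.hasSum_pow_div_log_of_abs_lt_one habs).mul_left (g t)
    rw [sub_sub_cancel] at h
    have heq : (fun n : ℕ => f (n+1) t / ((n:ℝ)+1))
        = fun n : ℕ => g t * ((1-t) ^ (n+1) / ((n:ℝ)+1)) := by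
      funext n; simp only [hf_def, hg_def]; ring
    rw [heq]; exact h
  have hnl : ∀ u ∈ Set.Ioo (0:ℝ) 1, 0 ≤ -Real.log u := by
    intro u hu
    have := Real.log_nonpos hu.1.le hu.2.le; linarith
  have hgb : ∀ u ∈ Set.Ioo (0:ℝ) 1, g u ≤ Real.exp b * u ^ (a-1) := by
    intro u hu
    simp only [hg_def]
    have hexp : Real.exp ((1-u)*b) ≤ Real.exp b := by
      apply Real.exp_le_exp.mpr; nlinarith [hu.1, hu.2]
    calc u^(a-1) * Real.exp ((1-u)*b) ≤ u^(a-1) * Real.exp b :=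
          mul_le_mul_of_nonneg_left hexp (Real.rpow_nonneg hu.1.le _)
      _ = Real.exp b * u^(a-1) := mul_comm _ _
  have hL_int : Integrable (fun u => g u * (-Real.log u)) μ := by
    have hdom : Integrable (fun u : ℝ => (Real.exp b * (2/a)) * u ^ (a/2-1)) μ :=
      (rpowIntOn ha2).const_mul _
    apply hdom.mono ((hg_meas.mul Real.measurable_log.neg).aestronglyMeasurable)
    rw [hμ_def]
    filter_upwards [ae_restrict_mem measurableSet_Ioo] with u hu
    have h1 : 0 < u := hu.1
    simp only [Pi.mul_apply, Pi.neg_apply]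
    rw [Real.norm_eq_abs, abs_of_nonneg (mul_nonneg (hg_nn u hu) (hnl u hu)),
      Real.norm_eq_abs, abs_of_nonneg (mul_nonneg (by positivity)
        (Real.rpow_nonneg h1.le _))]
    calc g u * (-Real.log u)
        ≤ (Real.exp b * u^(a-1)) * ((2/a) * u^(-(a/2))) :=
          mul_le_mul (hgb u hu) (neg_log_le_aux ha h1) (hnl u hu)
            (mul_nonneg (Real.exp_nonneg _) (Real.rpow_nonneg h1.le _))
      _ = (Real.exp b * (2/a)) * (u^(a-1) * u^(-(a/2))) := by ring
      _ = (Real.exp b * (2/a)) * u^(a/2-1) := by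
          rw [← Real.rpow_add h1]
          congr 1
          ring
  have hLnn_ae : 0 ≤ᵐ[μ] fun u => g u * (-Real.log u) := by
    rw [hμ_def]
    filter_upwards [ae_restrict_mem measurableSet_Ioo] with u hu
    exact mul_nonneg (hg_nn u hu) (hnl u hu)
  have hRHS : (∑' n : ℕ, J (n+1) / ((n:ℝ)+1)) = ∫ t, g t * (-Real.log t) ∂μ := by
    have hF_meas : ∀ n : ℕ, AEStronglyMeasurable (fun t => f (n+1) t / ((n:ℝ)+1)) μ :=
      fun n => ((hf_meas (n+1)).div_const _).aestronglyMeasurable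
    have hnn_ae : ∀ n : ℕ, 0 ≤ᵐ[μ] fun t => f (n+1) t / ((n:ℝ)+1) := by
      intro n
      rw [hμ_def]
      filter_upwards [ae_restrict_mem measurableSet_Ioo] with t ht
      exact div_nonneg (hf_nn _ t ht) (by positivity)
    have hkey : (∑' n : ℕ, ∫⁻ t, ‖f (n+1) t / ((n:ℝ)+1)‖₊ ∂μ) ≠ ⊤ := by
      have heq : ∀ n : ℕ, (∫⁻ t, (‖f (n+1) t / ((n:ℝ)+1)‖₊ : ℝ≥0∞) ∂μ)
          = ∫⁻ t, ENNReal.ofReal (f (n+1) t / ((n:ℝ)+1)) ∂μ := by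
        intro n
        apply lintegral_congr_ae
        filter_upwards [hnn_ae n] with t ht
        rw [← Real.enorm_eq_ofReal ht, enorm_eq_nnnorm]
      simp only [heq]
      rw [← lintegral_tsum (fun n => (((hf_meas (n+1)).div_const _).ennreal_ofReal).aemeasurable)]
      have h2 : (∫⁻ t, ∑' n : ℕ, ENNReal.ofReal (f (n+1) t / ((n:ℝ)+1)) ∂μ)
          = ∫⁻ t, ENNReal.ofReal (g t * (-Real.log t)) ∂μ := by
        apply lintegral_congr_ae
        rw [hμ_def]
        filter_upwards [ae_restrict_mem measurableSet_Ioo] with t ht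
        rw [← ENNReal.ofReal_tsum_of_nonneg
          (fun n => div_nonneg (hf_nn _ t ht) (by positivity)) (hlog t ht).summable,
          (hlog t ht).tsum_eq]
      rw [h2, ← ofReal_integral_eq_lintegral_ofReal hL_int hLnn_ae]
      exact ENNReal.ofReal_ne_top
    have h3 : (∑' n : ℕ, J (n+1)/((n:ℝ)+1)) = ∑' n : ℕ, ∫ t, f (n+1) t / ((n:ℝ)+1) ∂μ := by
      apply tsum_congr; intro n
      rw [hJ' (n+1), ← integral_div]
    rw [h3, ← integral_tsum hF_meas hkey]
    apply integral_congr_ae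
    rw [hμ_def]
    filter_upwards [ae_restrict_mem measurableSet_Ioo] with t ht
    exact (hlog t ht).tsum_eq
  -- product side
  set G : ℝ × ℝ → ℝ := fun p => g (p.1 * p.2) with hG_def
  have hprod_meas : μ.prod μ = volume.restrict ((Set.Ioo (0:ℝ) 1) ×ˢ (Set.Ioo (0:ℝ) 1)) := by
    rw [hμ_def, Measure.prod_restrict, ← Measure.volume_eq_prod]
  have hG_int : Integrable G (μ.prod μ) := by
    have hdom : Integrable (fun p : ℝ × ℝ => Real.exp b * (p.1 ^ (a-1) * p.2 ^ (a-1))) (μ.prod μ) :=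
      ((rpowIntOn ha1).mul_prod (rpowIntOn ha1)).const_mul _
    apply hdom.mono ((hg_meas.comp (measurable_fst.mul measurable_snd)).aestronglyMeasurable)
    rw [hprod_meas]
    filter_upwards [ae_restrict_mem (measurableSet_Ioo.prod measurableSet_Ioo)] with p hp
    obtain ⟨hp1, hp2⟩ := hp
    have h1 : 0 < p.1 := hp1.1
    have h2 : 0 < p.2 := hp2.1
    have hmul : 0 < p.1 * p.2 := mul_pos h1 h2
    simp only [hG_def, hg_def, Function.comp, Pi.mul_apply]
    rw [Real.norm_eq_abs, Real.norm_eq_abs, abs_of_nonneg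
      (mul_nonneg (Real.rpow_nonneg hmul.le _) (Real.exp_nonneg _)),
      abs_of_nonneg (mul_nonneg (Real.exp_nonneg _)
      (mul_nonneg (Real.rpow_nonneg h1.le _) (Real.rpow_nonneg h2.le _)))]
    have hexp : Real.exp ((1 - p.1*p.2)*b) ≤ Real.exp b := by
      apply Real.exp_le_exp.mpr; nlinarith [hmul]
    calc (p.1*p.2)^(a-1) * Real.exp ((1 - p.1*p.2)*b)
        ≤ (p.1*p.2)^(a-1) * Real.exp b :=
          mul_le_mul_of_nonneg_left hexp (Real.rpow_nonneg hmul.le _)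
      _ = Real.exp b * (p.1^(a-1) * p.2^(a-1)) := by
          rw [Real.mul_rpow h1.le h2.le]; ring
  have hc_int : ∀ n : ℕ, Integrable
      (fun p : ℝ×ℝ => ((-b)^n / (n.factorial:ℝ)) * (f n p.1 * f n p.2)) (μ.prod μ) :=
    fun n => ((hf_int n).mul_prod (hf_int n)).const_mul _
  have hnorm_int : ∀ n : ℕ, (∫ p, ‖((-b)^n / (n.factorial:ℝ)) * (f n p.1 * f n p.2)‖ ∂(μ.prod μ))
      = (b^n / (n.factorial:ℝ)) * (J n * J n) := by
    intro n
    have hae : ∀ᵐ p ∂(μ.prod μ), ‖((-b)^n / (n.factorial:ℝ)) * (f n p.1 * f n p.2)‖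
        = (b^n / (n.factorial:ℝ)) * (f n p.1 * f n p.2) := by
      rw [hprod_meas]
      filter_upwards [ae_restrict_mem (measurableSet_Ioo.prod measurableSet_Ioo)] with p hp
      obtain ⟨hp1, hp2⟩ := hp
      rw [Real.norm_eq_abs, abs_mul, abs_div, abs_pow, abs_neg, abs_of_nonneg hb.le,
        abs_of_nonneg (mul_nonneg (hf_nn n _ hp1) (hf_nn n _ hp2)), Nat.abs_cast]
    rw [integral_congr_ae hae, integral_const_mul, integral_prod_mul, ← hJ' n]
  have hsum_norm : Summable (fun n : ℕ =>
      ∫ p, ‖((-b)^n / (n.factorial:ℝ)) * (f n p.1 * f n p.2)‖ ∂(μ.prod μ)) := by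
    apply Summable.of_nonneg_of_le
      (fun n => integral_nonneg fun p => norm_nonneg _) (fun n => ?_)
      ((Real.summable_pow_div_factorial b).mul_right ((J 0)^2))
    rw [hnorm_int n]
    have hsq : J n * J n ≤ (J 0)^2 := by nlinarith [hJnn n, hJle n]
    exact mul_le_mul_of_nonneg_left hsq (by positivity)
  have hT : (∑' n : ℕ, (-b)^n * (J n)^2 / (n.factorial : ℝ)) = ∫ p, G p ∂(μ.prod μ) := by
    have h1 : ∀ n : ℕ, (-b)^n * (J n)^2/(n.factorial:ℝ)
        = ∫ p, ((-b)^n/(n.factorial:ℝ)) * (f n p.1 * f n p.2) ∂(μ.prod μ) := by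
      intro n
      rw [integral_const_mul, integral_prod_mul, ← hJ' n]
      ring
    rw [tsum_congr h1, integral_tsum_of_summable_integral_norm hc_int hsum_norm]
    apply integral_congr_ae
    rw [hprod_meas]
    filter_upwards [ae_restrict_mem (measurableSet_Ioo.prod measurableSet_Ioo)] with p hp
    obtain ⟨hp1, hp2⟩ := hp
    have hterm : ∀ n : ℕ, ((-b)^n/(n.factorial:ℝ)) * (f n p.1 * f n p.2)
        = ((-b*((1-p.1)*(1-p.2)))^n / (n.factorial:ℝ))
          * (p.1^(a-1) * p.2^(a-1) * Real.exp ((1-p.1)*b) * Real.exp ((1-p.2)*b)) := by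
      intro n; simp only [hf_def, mul_pow]; ring
    rw [tsum_congr hterm, tsum_mul_right, exp_tsum_div]
    simp only [hG_def, hg_def]
    have hexp3 : Real.exp (-b*((1-p.1)*(1-p.2))) * (Real.exp ((1-p.1)*b) * Real.exp ((1-p.2)*b))
        = Real.exp ((1 - p.1*p.2)*b) := by
      rw [← Real.exp_add, ← Real.exp_add]; congr 1; ring
    calc Real.exp (-b*((1-p.1)*(1-p.2)))
          * (p.1^(a-1) * p.2^(a-1) * Real.exp ((1-p.1)*b) * Real.exp ((1-p.2)*b))
        = (p.1^(a-1) * p.2^(a-1))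
          * (Real.exp (-b*((1-p.1)*(1-p.2))) * (Real.exp ((1-p.1)*b) * Real.exp ((1-p.2)*b))) := by
          ring
      _ = (p.1*p.2)^(a-1) * Real.exp ((1 - p.1*p.2)*b) := by
          rw [hexp3, Real.mul_rpow hp1.1.le hp2.1.le]
  have hinner : ∀ s ∈ Set.Ioo (0:ℝ) 1,
      (∫ t, G (s, t) ∂μ) = s⁻¹ * ∫ u in Set.Ioo 0 s, g u := by
    intro s hs
    have hG1 : (∫ t, G (s, t) ∂μ) = ∫ t in Set.Ioo (0:ℝ) 1, g (s * t) := by rw [hμ_def]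
    rw [hG1, ← integral_Ioc_eq_integral_Ioo, ← intervalIntegral.integral_of_le zero_le_one,
      intervalIntegral.integral_comp_mul_left g hs.1.ne', mul_zero, mul_one,
      intervalIntegral.integral_of_le hs.1.le, integral_Ioc_eq_integral_Ioo, smul_eq_mul]
  set K : ℝ × ℝ → ℝ := fun p => if p.2 < p.1 then p.1⁻¹ * g p.2 else 0 with hK_def
  have hK_meas : Measurable K := by
    simp only [hK_def]
    exact Measurable.ite (measurableSet_lt measurable_snd measurable_fst)
      (measurable_fst.inv.mul (hg_meas.comp measurable_snd)) measurable_const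
  have hK_int : Integrable K (μ.prod μ) := by
    have hdom : Integrable (fun p : ℝ × ℝ => Real.exp b * (p.1 ^ (a/2-1) * p.2 ^ (a/2-1)))
        (μ.prod μ) := ((rpowIntOn ha2).mul_prod (rpowIntOn ha2)).const_mul _
    apply hdom.mono hK_meas.aestronglyMeasurable
    rw [hprod_meas]
    filter_upwards [ae_restrict_mem (measurableSet_Ioo.prod measurableSet_Ioo)] with p hp
    obtain ⟨hp1, hp2⟩ := hp
    have h1 : 0 < p.1 := hp1.1
    have h2 : 0 < p.2 := hp2.1
    have hdnn : (0:ℝ) ≤ Real.exp b * (p.1 ^ (a/2-1) * p.2 ^ (a/2-1)) :=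
      mul_nonneg (Real.exp_nonneg _)
        (mul_nonneg (Real.rpow_nonneg h1.le _) (Real.rpow_nonneg h2.le _))
    rw [Real.norm_eq_abs (Real.exp b * _), abs_of_nonneg hdnn]
    simp only [hK_def]
    by_cases hlt : p.2 < p.1
    · rw [if_pos hlt]
      have hKnn : (0:ℝ) ≤ p.1⁻¹ * g p.2 :=
        mul_nonneg (inv_nonneg.mpr h1.le) (hg_nn _ hp2)
      rw [Real.norm_eq_abs, abs_of_nonneg hKnn]
      have e1 : p.1⁻¹ = p.1^(a/2-1) * p.1^(-(a/2)) := by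
        rw [← Real.rpow_add h1]
        rw [show a/2 - 1 + -(a/2) = -1 by ring, Real.rpow_neg_one]
      have e2 : p.1^(-(a/2)) ≤ p.2^(-(a/2)) := by
        rw [Real.rpow_neg h1.le, Real.rpow_neg h2.le]
        have hle : p.2^(a/2) ≤ p.1^(a/2) := Real.rpow_le_rpow h2.le hlt.le (by positivity)
        exact inv_anti₀ (Real.rpow_pos_of_pos h2 _) hle
      calc p.1⁻¹ * g p.2
          ≤ (p.1^(a/2-1) * p.2^(-(a/2))) * (Real.exp b * p.2^(a-1)) := by
            rw [e1]
            apply mul_le_mul _ (hgb _ hp2) (hg_nn _ hp2)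
              (mul_nonneg (Real.rpow_nonneg h1.le _) (Real.rpow_nonneg h2.le _))
            exact mul_le_mul_of_nonneg_left e2 (Real.rpow_nonneg h1.le _)
        _ = Real.exp b * (p.1^(a/2-1) * (p.2^(a-1) * p.2^(-(a/2)))) := by ring
        _ = Real.exp b * (p.1 ^ (a/2-1) * p.2 ^ (a/2-1)) := by
            rw [← Real.rpow_add h2, show a - 1 + -(a/2) = a/2 - 1 by ring]
    · rw [if_neg hlt]
      simpa using hdnn
  have hKleft : ∀ s ∈ Set.Ioo (0:ℝ) 1,
      (∫ u, K (s, u) ∂μ) = s⁻¹ * ∫ u in Set.Ioo 0 s, g u := by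
    intro s hs
    have hfun : (fun u => K (s, u)) = (Set.Iio s).indicator (fun u => s⁻¹ * g u) := by
      funext u; simp [hK_def, Set.indicator_apply, Set.mem_Iio]
    rw [hfun, hμ_def, integral_indicator measurableSet_Iio,
      Measure.restrict_restrict measurableSet_Iio]
    have hset : Set.Iio s ∩ Set.Ioo 0 1 = Set.Ioo 0 s := by
      ext u
      simp only [Set.mem_inter_iff, Set.mem_Iio, Set.mem_Ioo]
      constructor
      · rintro ⟨h1, h2, h3⟩; exact ⟨h2, h1⟩
      · rintro ⟨h1, h2⟩; exact ⟨h2, h1, h2.trans hs.2⟩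
    rw [hset, integral_const_mul]
  have hKright : ∀ u ∈ Set.Ioo (0:ℝ) 1,
      (∫ s, K (s, u) ∂μ) = g u * (-Real.log u) := by
    intro u hu
    have hfun : (fun s => K (s, u)) = (Set.Ioi u).indicator (fun s => s⁻¹ * g u) := by
      funext s; simp [hK_def, Set.indicator_apply, Set.mem_Ioi]
    rw [hfun, hμ_def, integral_indicator measurableSet_Ioi,
      Measure.restrict_restrict measurableSet_Ioi]
    have hset : Set.Ioi u ∩ Set.Ioo 0 1 = Set.Ioo u 1 := by
      ext s
      simp only [Set.mem_inter_iff, Set.mem_Ioi, Set.mem_Ioo]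
      constructor
      · rintro ⟨h1, h2, h3⟩; exact ⟨h1, h3⟩
      · rintro ⟨h1, h2⟩; exact ⟨h1, hu.1.trans h1, h2⟩
    rw [hset, integral_mul_const, ← integral_Ioc_eq_integral_Ioo,
      ← intervalIntegral.integral_of_le hu.2.le, integral_inv_of_pos hu.1 one_pos,
      one_div, Real.log_inv]
    ring
  have hGK : (∫ p, G p ∂(μ.prod μ)) = ∫ t, g t * (-Real.log t) ∂μ := by
    rw [integral_prod _ hG_int]
    have e1 : (∫ s, ∫ t, G (s, t) ∂μ ∂μ) = ∫ s, ∫ u, K (s, u) ∂μ ∂μ := by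
      apply integral_congr_ae
      filter_upwards [ae_restrict_mem measurableSet_Ioo] with s hs
      rw [hinner s hs, hKleft s hs]
    have e2 : (∫ s, ∫ u, K (s, u) ∂μ ∂μ) = ∫ u, ∫ s, K (s, u) ∂μ ∂μ :=
      integral_integral_swap hK_int
    rw [e1, e2]
    apply integral_congr_ae
    filter_upwards [ae_restrict_mem measurableSet_Ioo] with u hu
    rw [hKright u hu]
  have hsummableT : Summable (fun n : ℕ => (-b)^n * (J n)^2 / (n.factorial : ℝ)) := by
    apply Summable.of_norm_bounded (g := fun n => b^n/(n.factorial:ℝ) * (J 0)^2)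
      ((Real.summable_pow_div_factorial b).mul_right _)
    intro n
    rw [Real.norm_eq_abs, abs_div, abs_mul, abs_pow, abs_neg, abs_of_nonneg hb.le,
      abs_of_nonneg (sq_nonneg (J n)), Nat.abs_cast]
    have hsq : (J n)^2 ≤ (J 0)^2 := by nlinarith [hJnn n, hJle n]
    calc b^n * (J n)^2 / (n.factorial:ℝ) = b^n/(n.factorial:ℝ) * (J n)^2 := by ring
      _ ≤ b^n/(n.factorial:ℝ) * (J 0)^2 := mul_le_mul_of_nonneg_left hsq (by positivity)
  have hshift : (∑' n : ℕ, (-b)^(n+1) * (J (n+1))^2 / (((n+1).factorial : ℕ) : ℝ)) + (J 0)^2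
      = ∑' n : ℕ, (-b)^n * (J n)^2 / (n.factorial : ℝ) := by
    rw [Summable.tsum_eq_zero_add hsummableT]
    simp [Nat.factorial]
    ring
  calc (∑' n : ℕ, (-b) ^ (n + 1) * (J (n + 1)) ^ 2 / ((n + 1).factorial : ℝ)) + (J 0) ^ 2
      = ∑' n : ℕ, (-b)^n * (J n)^2 / (n.factorial : ℝ) := hshift
    _ = ∫ p, G p ∂(μ.prod μ) := hT
    _ = ∫ t, g t * (-Real.log t) ∂μ := hGK
    _ = ∑' n : ℕ, J (n+1) / ((n:ℝ)+1) := hRHS.symm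
end

section
/- The derivative of the dispersion function Λ(y,λ) = 1 - (c y²/2π) J_1(y,-λy) with respect to λ is ∂_λ Λ = (cy/2π)(J_0(y,-λy) - λy Σ_{n≥1} J_n(y,-λy)/n), where J_n(y,-λy) = ∫₀¹ t^{y²+λy-1} e^{(1-t)y²}(1-t)^n dt. -/
open MeasureTheory Real Set

/-- master integrable bound -/
lemma master_integrable {b : ℝ} (hb : 0 < b) :
    IntegrableOn (fun t : ℝ => t ^ (b - 1) * (|Real.log t| + 1)) (Set.Ioo 0 1) := by
  have h1 : IntegrableOn (fun t : ℝ => t ^ (b / 2 - 1)) (Set.Ioo 0 1) := by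
    have := intervalIntegral.intervalIntegrable_rpow' (a := 0) (b := 1)
      (r := b / 2 - 1) (by linarith)
    rw [intervalIntegrable_iff_integrableOn_Ioc_of_le zero_le_one] at this
    exact this.mono_set Set.Ioo_subset_Ioc_self
  have h2 : IntegrableOn (fun t : ℝ => (2 / b + 1) * t ^ (b / 2 - 1)) (Set.Ioo 0 1) :=
    h1.const_mul _
  refine h2.integrable.mono' ?_ ?_
  · apply Measurable.aestronglyMeasurable
    exact (measurable_id.pow_const _).mul (measurable_log.abs.add measurable_const)
  · rw [ae_restrict_iff' measurableSet_Ioo]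
    refine Filter.Eventually.of_forall fun t ht => ?_
    have ht0 : 0 < t := ht.1
    have ht1 : t < 1 := ht.2
    have hlog : |Real.log t| ≤ (2 / b) * t ^ (-(b / 2)) := by
      rw [abs_of_nonpos (Real.log_nonpos ht0.le ht1.le)]
      have := Real.log_le_rpow_div (x := t⁻¹) (by positivity) (half_pos hb)
      rw [Real.log_inv, Real.inv_rpow ht0.le, ← Real.rpow_neg ht0.le] at this
      calc -Real.log t ≤ t ^ (-(b / 2)) / (b / 2) := this
        _ = (2 / b) * t ^ (-(b / 2)) := by field_simp
    have hpow : t ^ (b - 1) ≤ t ^ (b / 2 - 1) :=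
      Real.rpow_le_rpow_of_exponent_ge ht0 ht1.le (by linarith)
    have hnn : (0:ℝ) ≤ t ^ (b - 1) := by positivity
    rw [Real.norm_eq_abs, abs_of_nonneg (by positivity)]
    calc t ^ (b - 1) * (|Real.log t| + 1)
        ≤ t ^ (b - 1) * ((2 / b) * t ^ (-(b / 2)) + 1) := by
          apply mul_le_mul_of_nonneg_left (by linarith) hnn
      _ = (2 / b) * (t ^ (b - 1) * t ^ (-(b / 2))) + t ^ (b - 1) := by ring
      _ = (2 / b) * t ^ (b / 2 - 1) + t ^ (b - 1) := by
          rw [← Real.rpow_add ht0]; ring_nf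
      _ ≤ (2 / b) * t ^ (b / 2 - 1) + t ^ (b / 2 - 1) := by linarith
      _ = (2 / b + 1) * t ^ (b / 2 - 1) := by ring

lemma integrableOn_of_bound {f : ℝ → ℝ} {b K : ℝ} (hb : 0 < b)
    (hmeas : AEStronglyMeasurable f (volume.restrict (Set.Ioo 0 1)))
    (hbound : ∀ t ∈ Set.Ioo (0:ℝ) 1, ‖f t‖ ≤ K * (t ^ (b - 1) * (|Real.log t| + 1))) :
    IntegrableOn f (Set.Ioo 0 1) := by
  refine ((master_integrable hb).const_mul K).mono' hmeas ?_
  rw [ae_restrict_iff' measurableSet_Ioo]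
  exact Filter.Eventually.of_forall hbound
lemma contOn_rpow (b : ℝ) : ContinuousOn (fun t : ℝ => t ^ b) (Set.Ioo 0 1) :=
  fun t ht => (Real.continuousAt_rpow_const t b (Or.inl ht.1.ne')).continuousWithinAt

lemma contOn_log : ContinuousOn Real.log (Set.Ioo (0:ℝ) 1) :=
  fun t ht => (Real.continuousAt_log ht.1.ne').continuousWithinAt

/-- The derivative in `λ` of the dispersion function
`Λ(y,λ) = 1 - (c y²/(2π)) J₁(y,-λy)`, with
`J_n(y,-λy) = ∫₀¹ t^(y²+λy-1) e^((1-t)y²) (1-t)^n dt`, is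
`∂_λ Λ = (c y/(2π)) (J₀(y,-λy) - λ y Σ_{n≥1} J_n(y,-λy)/n)`. -/
theorem dispersion_derivative (c y lam : ℝ) (hy : 0 < y) (ha : 0 < y ^ 2 + lam * y)
    (J : ℕ → ℝ → ℝ)
    (hJ : ∀ (m : ℕ) (μ : ℝ), J m μ =
      ∫ t in Set.Ioo (0 : ℝ) 1,
        t ^ (y ^ 2 + μ * y - 1) * Real.exp ((1 - t) * y ^ 2) * (1 - t) ^ m) :
    HasDerivAt (fun μ : ℝ => 1 - c * y ^ 2 / (2 * π) * J 1 μ)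
      (c * y / (2 * π) *
        (J 0 lam - lam * y * ∑' n : ℕ, J (n + 1) lam / ((n : ℝ) + 1))) lam := by
  set a : ℝ := y ^ 2 + lam * y with ha_def
  set E : ℝ → ℝ := fun t => Real.exp ((1 - t) * y ^ 2) with hE_def
  have hEcont : Continuous E := by fun_prop
  have hEbd : ∀ t ∈ Set.Ioo (0:ℝ) 1, E t ≤ Real.exp (y ^ 2) := by
    intro t ht
    exact Real.exp_le_exp.2 (by nlinarith [ht.1, sq_nonneg y])
  have hEpos : ∀ t : ℝ, 0 < E t := fun t => Real.exp_pos _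
  -- integrability of t^(b-1) * E t * log t * (1-t)^m  -like things
  have hint1 : ∀ m : ℕ, IntegrableOn (fun t : ℝ => t ^ (a - 1) * E t * (1 - t) ^ m)
      (Set.Ioo 0 1) := by
    intro m
    refine integrableOn_of_bound (K := Real.exp (y ^ 2)) ha ?_ ?_
    · exact (((contOn_rpow _).mul hEcont.continuousOn).mul
        (by fun_prop)).aestronglyMeasurable measurableSet_Ioo
    · intro t ht
      have h1 : (0:ℝ) ≤ 1 - t := by linarith [ht.2]
      have h2 : (1 - t) ^ m ≤ 1 := pow_le_one₀ h1 (by linarith [ht.1])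
      have h3 : (0:ℝ) < t ^ (a - 1) := Real.rpow_pos_of_pos ht.1 _
      rw [Real.norm_eq_abs,
        abs_of_nonneg (mul_nonneg (mul_nonneg h3.le (hEpos t).le) (pow_nonneg h1 m))]
      calc t ^ (a - 1) * E t * (1 - t) ^ m ≤ t ^ (a - 1) * Real.exp (y ^ 2) * 1 := by
            apply mul_le_mul (mul_le_mul_of_nonneg_left (hEbd t ht) h3.le) h2
              (pow_nonneg h1 m) (by positivity)
        _ ≤ Real.exp (y ^ 2) * (t ^ (a - 1) * (|Real.log t| + 1)) := by
            rw [mul_one, mul_comm (t ^ (a - 1)) (Real.exp (y ^ 2))]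
            exact mul_le_mul_of_nonneg_left
              (le_mul_of_one_le_right h3.le (by linarith [abs_nonneg (Real.log t)]))
              (Real.exp_pos _).le
  have hintL : IntegrableOn (fun t : ℝ => t ^ (a - 1) * E t * Real.log t) (Set.Ioo 0 1) := by
    refine integrableOn_of_bound (K := Real.exp (y ^ 2)) ha ?_ ?_
    · exact (((contOn_rpow _).mul hEcont.continuousOn).mul
        contOn_log).aestronglyMeasurable measurableSet_Ioo
    · intro t ht
      have h3 : (0:ℝ) < t ^ (a - 1) := Real.rpow_pos_of_pos ht.1 _
      rw [Real.norm_eq_abs, abs_mul,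
        abs_of_nonneg (mul_nonneg h3.le (hEpos t).le)]
      calc t ^ (a - 1) * E t * |Real.log t| ≤ t ^ (a - 1) * Real.exp (y ^ 2) * |Real.log t| := by
            apply mul_le_mul_of_nonneg_right (mul_le_mul_of_nonneg_left (hEbd t ht) h3.le)
              (abs_nonneg _)
        _ ≤ Real.exp (y ^ 2) * (t ^ (a - 1) * (|Real.log t| + 1)) := by
            rw [mul_comm (t ^ (a-1)) (Real.exp (y^2)), mul_assoc]
            exact mul_le_mul_of_nonneg_left
              (mul_le_mul_of_nonneg_left (by linarith [abs_nonneg (Real.log t)]) h3.le)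
              (Real.exp_pos _).le
  -- Step A: differentiate under the integral
  have hbound_int : IntegrableOn
      (fun t : ℝ => (y * Real.exp (y ^ 2)) * (t ^ (a / 2 - 1) * (|Real.log t| + 1)))
      (Set.Ioo 0 1) := (master_integrable (half_pos ha)).const_mul _
  have hderivA : HasDerivAt
      (fun μ : ℝ => ∫ t in Set.Ioo (0:ℝ) 1, t ^ (y ^ 2 + μ * y - 1) * E t * (1 - t))
      (∫ t in Set.Ioo (0:ℝ) 1, y * Real.log t * (t ^ (a - 1) * E t * (1 - t))) lam := by
    have hε : 0 < min 1 (a / (2 * y)) := lt_min one_pos (by positivity)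
    have key := hasDerivAt_integral_of_dominated_loc_of_deriv_le (𝕜 := ℝ)
      (μ := volume.restrict (Set.Ioo (0:ℝ) 1)) (x₀ := lam)
      (F := fun μ t => t ^ (y ^ 2 + μ * y - 1) * E t * (1 - t))
      (F' := fun μ t => y * Real.log t * (t ^ (y ^ 2 + μ * y - 1) * E t * (1 - t)))
      (bound := fun t => (y * Real.exp (y ^ 2)) * (t ^ (a / 2 - 1) * (|Real.log t| + 1)))
      (Metric.ball_mem_nhds lam hε) ?_ ?_ ?_ ?_ hbound_int ?_
    · exact key.2
    · refine Filter.Eventually.of_forall fun x => ?_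
      exact (((contOn_rpow _).mul hEcont.continuousOn).mul
        (by fun_prop)).aestronglyMeasurable measurableSet_Ioo
    · have h := hint1 1
      simp only [pow_one] at h
      have : a - 1 = y ^ 2 + lam * y - 1 := by rw [ha_def]
      rw [this] at h
      exact h
    · exact ((continuous_const.continuousOn.mul contOn_log).mul
        (((contOn_rpow _).mul hEcont.continuousOn).mul
          (by fun_prop))).aestronglyMeasurable measurableSet_Ioo
    · rw [ae_restrict_iff' measurableSet_Ioo]
      refine Filter.Eventually.of_forall fun t ht x hx => ?_
      have ht0 : 0 < t := ht.1
      have ht1 : t < 1 := ht.2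
      have hax : a / 2 ≤ y ^ 2 + x * y := by
        have hxl : |x - lam| < a / (2 * y) :=
          lt_of_lt_of_le (by simpa [Real.dist_eq] using hx) (min_le_right _ _)
        have := (abs_lt.1 hxl).1
        have h2 : -(a / (2 * y)) * y < (x - lam) * y :=
          mul_lt_mul_of_pos_right this hy
        have hy' : y ≠ 0 := hy.ne'
        have : y ^ 2 + x * y = a + (x - lam) * y := by rw [ha_def]; ring
        rw [this]
        have : -(a / (2 * y)) * y = -(a / 2) := by field_simp
        nlinarith [h2]
      have hpow : t ^ (y ^ 2 + x * y - 1) ≤ t ^ (a / 2 - 1) :=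
        Real.rpow_le_rpow_of_exponent_ge ht0 ht1.le (by linarith)
      have hp0 : (0:ℝ) < t ^ (y ^ 2 + x * y - 1) := Real.rpow_pos_of_pos ht0 _
      have h1t : (0:ℝ) ≤ 1 - t := by linarith
      rw [Real.norm_eq_abs, abs_mul, abs_mul, abs_of_nonneg hy.le,
        abs_of_nonneg (mul_nonneg (mul_nonneg hp0.le (hEpos t).le) h1t)]
      calc y * |Real.log t| * (t ^ (y ^ 2 + x * y - 1) * E t * (1 - t))
          ≤ y * |Real.log t| * (t ^ (a / 2 - 1) * Real.exp (y ^ 2) * 1) := by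
            apply mul_le_mul_of_nonneg_left _ (mul_nonneg hy.le (abs_nonneg _))
            apply mul_le_mul (mul_le_mul hpow (hEbd t ht) (hEpos t).le
              (Real.rpow_pos_of_pos ht0 _).le) (by linarith) h1t
            positivity
          _ ≤ y * Real.exp (y ^ 2) * (t ^ (a / 2 - 1) * (|Real.log t| + 1)) := by
            have hq : (0:ℝ) < t ^ (a / 2 - 1) := Real.rpow_pos_of_pos ht0 _
            have := abs_nonneg (Real.log t)
            nlinarith [mul_nonneg (mul_nonneg hy.le (Real.exp_pos (y ^ 2)).le) hq.le]
    · rw [ae_restrict_iff' measurableSet_Ioo]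
      refine Filter.Eventually.of_forall fun t ht x _ => ?_
      have ht0 : 0 < t := ht.1
      have heq : (fun μ : ℝ => t ^ (y ^ 2 + μ * y - 1) * E t * (1 - t))
          = fun μ : ℝ => Real.exp (Real.log t * (y ^ 2 + μ * y - 1)) * (E t * (1 - t)) := by
        funext μ
        rw [Real.rpow_def_of_pos ht0]
        ring
      rw [heq]
      have hinner : HasDerivAt (fun μ : ℝ => Real.log t * (y ^ 2 + μ * y - 1))
          (Real.log t * y) x := by
        have : HasDerivAt (fun μ : ℝ => y ^ 2 + μ * y - 1) y x := by
          simpa using (((hasDerivAt_id x).mul_const y).const_add (y ^ 2)).sub_const 1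
        simpa using this.const_mul (Real.log t)
      have := (hinner.exp).mul_const (E t * (1 - t))
      refine this.congr_deriv ?_
      symm
      show y * Real.log t * (t ^ (y ^ 2 + x * y - 1) * E t * (1 - t)) = _
      rw [Real.rpow_def_of_pos ht0]
      ring
  -- Step B: tsum equals integral of -log
  have hG : IntegrableOn (fun t : ℝ => t ^ (a - 1) * E t * (-Real.log t)) (Set.Ioo 0 1) := by
    exact hintL.neg.congr (Filter.Eventually.of_forall fun t => by simp [mul_neg])
  have hsum : ∀ t ∈ Set.Ioo (0:ℝ) 1, HasSum
      (fun n : ℕ => t ^ (a - 1) * E t * (1 - t) ^ (n + 1) / ((n : ℝ) + 1))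
      (t ^ (a - 1) * E t * (-Real.log t)) := by
    intro t ht
    have h1 : |1 - t| < 1 := abs_lt.2 ⟨by linarith [ht.2], by linarith [ht.1]⟩
    have h2 := (Real.hasSum_pow_div_log_of_abs_lt_one h1).mul_left (t ^ (a - 1) * E t)
    simp only [sub_sub_cancel] at h2
    convert h2 using 2 with n
    · rfl
    push_cast
    ring
  have hgmeas : ∀ n : ℕ, AEStronglyMeasurable
      (fun t : ℝ => t ^ (a - 1) * E t * (1 - t) ^ (n + 1) / ((n : ℝ) + 1))
      (volume.restrict (Set.Ioo 0 1)) := by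
    intro n
    exact ((((contOn_rpow _).mul hEcont.continuousOn).mul (by fun_prop)).div_const
      _).aestronglyMeasurable measurableSet_Ioo
  have hgnn : ∀ (n : ℕ), ∀ t ∈ Set.Ioo (0:ℝ) 1,
      0 ≤ t ^ (a - 1) * E t * (1 - t) ^ (n + 1) / ((n : ℝ) + 1) := by
    intro n t ht
    have := Real.rpow_pos_of_pos ht.1 (a - 1)
    have h1 : (0:ℝ) ≤ 1 - t := by linarith [ht.2]
    positivity
  have hB : ∑' n : ℕ, (∫ t in Set.Ioo (0:ℝ) 1,
        t ^ (a - 1) * E t * (1 - t) ^ (n + 1)) / ((n : ℝ) + 1)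
      = ∫ t in Set.Ioo (0:ℝ) 1, t ^ (a - 1) * E t * (-Real.log t) := by
    have hfin : ∑' n : ℕ, ∫⁻ t in Set.Ioo (0:ℝ) 1,
        ‖t ^ (a - 1) * E t * (1 - t) ^ (n + 1) / ((n : ℝ) + 1)‖₊ ≠ ⊤ := by
      simp only [← enorm_eq_nnnorm]
      rw [← lintegral_tsum fun n => (hgmeas n).enorm]
      have hle : ∫⁻ t in Set.Ioo (0:ℝ) 1, ∑' n : ℕ,
          (‖t ^ (a - 1) * E t * (1 - t) ^ (n + 1) / ((n : ℝ) + 1)‖₊ : ENNReal)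
          ≤ ∫⁻ t in Set.Ioo (0:ℝ) 1, ‖t ^ (a - 1) * E t * (-Real.log t)‖₊ := by
        refine lintegral_mono_ae ?_
        rw [ae_restrict_iff' measurableSet_Ioo]
        refine Filter.Eventually.of_forall fun t ht => ?_
        calc (∑' n : ℕ, (‖t ^ (a - 1) * E t * (1 - t) ^ (n + 1) / ((n : ℝ) + 1)‖₊ : ENNReal))
            = ∑' n : ℕ, ENNReal.ofReal
              (t ^ (a - 1) * E t * (1 - t) ^ (n + 1) / ((n : ℝ) + 1)) := by
              congr 1
              funext n
              rw [← enorm_eq_nnnorm, Real.enorm_eq_ofReal (hgnn n t ht)]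
          _ = ENNReal.ofReal (∑' n : ℕ,
              t ^ (a - 1) * E t * (1 - t) ^ (n + 1) / ((n : ℝ) + 1)) :=
              (ENNReal.ofReal_tsum_of_nonneg (fun n => hgnn n t ht)
                (hsum t ht).summable).symm
          _ = ENNReal.ofReal (t ^ (a - 1) * E t * (-Real.log t)) := by
              rw [(hsum t ht).tsum_eq]
          _ ≤ ‖t ^ (a - 1) * E t * (-Real.log t)‖₊ := Real.ofReal_le_enorm _
      exact (hle.trans_lt hG.hasFiniteIntegral).ne
    calc ∑' n : ℕ, (∫ t in Set.Ioo (0:ℝ) 1,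
          t ^ (a - 1) * E t * (1 - t) ^ (n + 1)) / ((n : ℝ) + 1)
        = ∑' n : ℕ, ∫ t in Set.Ioo (0:ℝ) 1,
          t ^ (a - 1) * E t * (1 - t) ^ (n + 1) / ((n : ℝ) + 1) := by
          congr 1
          funext n
          rw [integral_div]
      _ = ∫ t in Set.Ioo (0:ℝ) 1, ∑' n : ℕ,
          t ^ (a - 1) * E t * (1 - t) ^ (n + 1) / ((n : ℝ) + 1) :=
          (MeasureTheory.integral_tsum hgmeas hfin).symm
      _ = ∫ t in Set.Ioo (0:ℝ) 1, t ^ (a - 1) * E t * (-Real.log t) := by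
          refine setIntegral_congr_fun measurableSet_Ioo fun t ht => ?_
          exact (hsum t ht).tsum_eq
  -- integrability of the derivative integrand
  have hint0 : IntegrableOn (fun t : ℝ => t ^ (a - 1) * E t) (Set.Ioo 0 1) := by
    have := hint1 0
    simpa [pow_zero] using this
  have hintD : IntegrableOn (fun t : ℝ => y * Real.log t * (t ^ (a - 1) * E t * (1 - t)))
      (Set.Ioo 0 1) := by
    refine integrableOn_of_bound (K := y * Real.exp (y ^ 2)) ha ?_ ?_
    · exact ((continuous_const.continuousOn.mul contOn_log).mul
        (((contOn_rpow _).mul hEcont.continuousOn).mul (by fun_prop))).aestronglyMeasurable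
        measurableSet_Ioo
    · intro t ht
      have ht0 : 0 < t := ht.1
      have h1t : (0:ℝ) ≤ 1 - t := by linarith [ht.2]
      have hp : (0:ℝ) < t ^ (a - 1) := Real.rpow_pos_of_pos ht0 _
      rw [Real.norm_eq_abs, abs_mul, abs_mul, abs_of_nonneg hy.le,
        abs_of_nonneg (mul_nonneg (mul_nonneg hp.le (hEpos t).le) h1t)]
      calc y * |Real.log t| * (t ^ (a - 1) * E t * (1 - t))
          ≤ y * |Real.log t| * (t ^ (a - 1) * Real.exp (y ^ 2) * 1) := by
            apply mul_le_mul_of_nonneg_left _ (mul_nonneg hy.le (abs_nonneg _))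
            apply mul_le_mul (mul_le_mul_of_nonneg_left (hEbd t ht) hp.le) (by linarith) h1t
            positivity
          _ ≤ y * Real.exp (y ^ 2) * (t ^ (a - 1) * (|Real.log t| + 1)) := by
            nlinarith [mul_nonneg (mul_nonneg hy.le (Real.exp_pos (y ^ 2)).le) hp.le,
              abs_nonneg (Real.log t)]
  -- Step C: FTC identity
  have hC : ∫ t in Set.Ioo (0:ℝ) 1,
      ((-y) * (y * Real.log t * (t ^ (a - 1) * E t * (1 - t))) - t ^ (a - 1) * E t
        - lam * y * (t ^ (a - 1) * E t * Real.log t)) = 0 := by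
    set F0 : ℝ → ℝ := fun t => -(t ^ a * E t * Real.log t) with hF0_def
    have hcont : ContinuousOn F0 (Set.Icc 0 1) := by
      intro t ht
      rcases eq_or_ne t 0 with rfl | ht0
      · rw [← continuousWithinAt_diff_self]
        have hsub : Set.Icc (0:ℝ) 1 \ {0} ⊆ Set.Ioi 0 :=
          fun s hs => hs.1.1.lt_of_ne' hs.2
        have hlim : Filter.Tendsto F0 (nhdsWithin 0 (Set.Ioi (0:ℝ))) (nhds 0) := by
          have h1 := tendsto_log_mul_rpow_nhdsGT_zero ha
          have h2 : Filter.Tendsto E (nhdsWithin 0 (Set.Ioi (0:ℝ))) (nhds (E 0)) :=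
            (hEcont.tendsto 0).mono_left nhdsWithin_le_nhds
          have h3 := (h1.mul h2).neg
          rw [zero_mul, neg_zero] at h3
          refine h3.congr' ?_
          refine Filter.eventuallyEq_of_mem self_mem_nhdsWithin fun s _ => ?_
          simp only [hF0_def]
          ring
        have hF00 : F0 0 = 0 := by simp [hF0_def, Real.log_zero]
        rw [ContinuousWithinAt, hF00]
        exact hlim.mono_left (nhdsWithin_mono 0 hsub)
      · have htpos : 0 < t := ht.1.lt_of_ne' ht0
        exact (((Real.continuousAt_rpow_const t a (Or.inl htpos.ne')).mul
          hEcont.continuousAt).mul (Real.continuousAt_log htpos.ne')).neg.continuousWithinAt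
    have hderiv : ∀ t ∈ Set.Ioo (0:ℝ) 1, HasDerivAt F0
        ((-y) * (y * Real.log t * (t ^ (a - 1) * E t * (1 - t))) - t ^ (a - 1) * E t
          - lam * y * (t ^ (a - 1) * E t * Real.log t)) t := by
      intro t ht
      have ht0 : 0 < t := ht.1
      have h1 : HasDerivAt (fun s : ℝ => s ^ a) (a * t ^ (a - 1)) t :=
        Real.hasDerivAt_rpow_const (Or.inl ht0.ne')
      have h2 : HasDerivAt E (E t * ((0 - 1) * y ^ 2)) t := by
        have hu : HasDerivAt (fun s : ℝ => (1 - s) * y ^ 2) ((0 - 1) * y ^ 2) t :=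
          ((hasDerivAt_const t (1:ℝ)).sub (hasDerivAt_id t)).mul_const (y ^ 2)
        exact hu.exp
      have h3 : HasDerivAt Real.log t⁻¹ t := Real.hasDerivAt_log ht0.ne'
      have h4 := ((h1.mul h2).mul h3).neg
      refine h4.congr_deriv ?_
      symm
      simp only [Pi.mul_apply]
      have e1 : t ^ a = t ^ (a - 1) * t := by
        rw [Real.rpow_sub ht0, Real.rpow_one]
        field_simp
      rw [e1, ha_def]
      field_simp
      ring
    have hii : IntervalIntegrable (fun t : ℝ =>
        (-y) * (y * Real.log t * (t ^ (a - 1) * E t * (1 - t))) - t ^ (a - 1) * E t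
          - lam * y * (t ^ (a - 1) * E t * Real.log t)) volume 0 1 := by
      rw [intervalIntegrable_iff_integrableOn_Ioc_of_le zero_le_one]
      refine IntegrableOn.congr_set_ae ?_ Ioo_ae_eq_Ioc.symm
      exact ((hintD.const_mul (-y)).sub hint0).sub (hintL.const_mul (lam * y))
    have hFTC := intervalIntegral.integral_eq_sub_of_hasDerivAt_of_le zero_le_one
      hcont hderiv hii
    rw [intervalIntegral.integral_of_le zero_le_one, integral_Ioc_eq_integral_Ioo] at hFTC
    rw [hFTC]
    simp [hF0_def, Real.log_zero, Real.log_one]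
  -- Assembly
  have hJ0 : J 0 lam = ∫ t in Set.Ioo (0:ℝ) 1, t ^ (a - 1) * E t := by
    rw [hJ]
    simp only [pow_zero, mul_one]
    rfl
  have hS : (∑' n : ℕ, J (n + 1) lam / ((n : ℝ) + 1))
      = -(∫ t in Set.Ioo (0:ℝ) 1, t ^ (a - 1) * E t * Real.log t) := by
    have hJn : ∀ n : ℕ, J (n + 1) lam
        = ∫ t in Set.Ioo (0:ℝ) 1, t ^ (a - 1) * E t * (1 - t) ^ (n + 1) := by
      intro n
      rw [hJ]
    calc (∑' n : ℕ, J (n + 1) lam / ((n : ℝ) + 1))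
        = ∑' n : ℕ, (∫ t in Set.Ioo (0:ℝ) 1,
            t ^ (a - 1) * E t * (1 - t) ^ (n + 1)) / ((n : ℝ) + 1) :=
          tsum_congr fun n => by rw [hJn n]
      _ = ∫ t in Set.Ioo (0:ℝ) 1, t ^ (a - 1) * E t * (-Real.log t) := hB
      _ = -(∫ t in Set.Ioo (0:ℝ) 1, t ^ (a - 1) * E t * Real.log t) := by
          rw [show (fun t : ℝ => t ^ (a - 1) * E t * (-Real.log t))
            = fun t : ℝ => -(t ^ (a - 1) * E t * Real.log t) from funext fun t => by ring,
            integral_neg]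
  have hfun : (fun μ : ℝ => 1 - c * y ^ 2 / (2 * π) * J 1 μ)
      = fun μ : ℝ => 1 - c * y ^ 2 / (2 * π) *
          ∫ t in Set.Ioo (0:ℝ) 1, t ^ (y ^ 2 + μ * y - 1) * E t * (1 - t) := by
    funext μ
    rw [hJ]
    simp only [pow_one]
    rfl
  rw [hfun]
  have hfinal := (hderivA.const_mul (c * y ^ 2 / (2 * π))).const_sub 1
  refine hfinal.congr_deriv ?_
  symm
  rw [hJ0, hS]
  have hsplit : (∫ t in Set.Ioo (0:ℝ) 1,
      ((-y) * (y * Real.log t * (t ^ (a - 1) * E t * (1 - t))) - t ^ (a - 1) * E t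
        - lam * y * (t ^ (a - 1) * E t * Real.log t)))
      = (-y) * (∫ t in Set.Ioo (0:ℝ) 1, y * Real.log t * (t ^ (a - 1) * E t * (1 - t)))
        - (∫ t in Set.Ioo (0:ℝ) 1, t ^ (a - 1) * E t)
        - lam * y * (∫ t in Set.Ioo (0:ℝ) 1, t ^ (a - 1) * E t * Real.log t) := by
    have i1 : IntegrableOn (fun t : ℝ =>
        (-y) * (y * Real.log t * (t ^ (a - 1) * E t * (1 - t))) - t ^ (a - 1) * E t)
        (Set.Ioo 0 1) := (hintD.const_mul (-y)).sub hint0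
    have i2 : IntegrableOn (fun t : ℝ => lam * y * (t ^ (a - 1) * E t * Real.log t))
        (Set.Ioo 0 1) := hintL.const_mul (lam * y)
    have i3 : IntegrableOn (fun t : ℝ =>
        (-y) * (y * Real.log t * (t ^ (a - 1) * E t * (1 - t)))) (Set.Ioo 0 1) :=
      hintD.const_mul (-y)
    rw [integral_sub i1 i2, integral_sub i3 hint0, integral_const_mul, integral_const_mul]
  have hkey := hsplit.symm.trans hC
  linear_combination (-(c * y / (2 * π))) * hkey
end

section
/- Laplace-type asymptotics for a_n: with a_n(y,λ) = y^{n+1} ∫₀¹ e^{y²(x + ln(1-x)) + λ y ln(1-x)} x^n (1-x)^{-1} dx, if n, y → ∞ with n^{3/2}/y → 0 and λ√n → 0, then a_n(y,λ) e^{n/2 - (n/2)ln n} → √π. -/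
open MeasureTheory Real Filter Topology

lemma my_log_one_sub_le {v : ℝ} (h0 : 0 ≤ v) (h1 : v < 1) :
    Real.log (1 - v) ≤ -v - v ^ 2 / 2 := by
  set f : ℝ → ℝ := fun w => -Real.log (1 - w) - w - w ^ 2 / 2 with hf
  have key : ∀ w ∈ Set.Icc (0 : ℝ) v, ∀ hw1 : w < 1, True := fun _ _ _ => trivial
  have hderiv : ∀ w ∈ Set.Ioo (0 : ℝ) v, HasDerivAt f ((1 - w)⁻¹ - 1 - w) w := by
    intro w hw
    have hw1 : w < 1 := lt_of_lt_of_le hw.2 h1.le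
    have h1w : (1 : ℝ) - w ≠ 0 := by linarith
    have hlog : HasDerivAt (fun w : ℝ => Real.log (1 - w)) ((1 - w)⁻¹ * (-1)) w := by
      exact (Real.hasDerivAt_log h1w).comp w (((hasDerivAt_id w).const_sub 1))
    have hpow : HasDerivAt (fun w : ℝ => w ^ 2 / 2) w w := by
      simpa using ((hasDerivAt_pow 2 w).div_const 2)
    have : HasDerivAt f (-((1 - w)⁻¹ * (-1)) - 1 - w) w :=
      (hlog.neg.sub (hasDerivAt_id w)).sub hpow
    convert this using 1
    ring
  have hcont : ContinuousOn f (Set.Icc (0 : ℝ) v) := by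
    apply ContinuousOn.sub
    apply ContinuousOn.sub
    · apply ContinuousOn.neg
      apply ContinuousOn.log
      · fun_prop
      · intro w hw
        have : w < 1 := lt_of_le_of_lt hw.2 h1
        intro h; linarith [sub_eq_zero.mp h]
    · fun_prop
    · fun_prop
  have hmono : MonotoneOn f (Set.Icc (0 : ℝ) v) := by
    rcases eq_or_lt_of_le h0 with h | h
    · intro a ha b hb hab
      have : a = v := le_antisymm ha.2 (h ▸ ha.1)
      have hb' : b = v := le_antisymm hb.2 (h ▸ hb.1)
      rw [this, hb']
    apply monotoneOn_of_deriv_nonneg (convex_Icc 0 v) hcont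
    · rw [interior_Icc]
      intro w hw
      exact (hderiv w hw).differentiableAt.differentiableWithinAt
    · rw [interior_Icc]
      intro w hw
      rw [(hderiv w hw).deriv]
      have hw1 : w < 1 := lt_of_lt_of_le hw.2 h1.le
      have h1w : (0 : ℝ) < 1 - w := by linarith
      have : (1 + w) ≤ (1 - w)⁻¹ := by
        rw [inv_eq_one_div, le_div_iff₀ h1w]
        nlinarith [hw.1]
      linarith
  have h0v : f 0 ≤ f v := by
    rcases eq_or_lt_of_le h0 with h | h
    · rw [← h]
    · exact hmono (Set.left_mem_Icc.2 h0) (Set.right_mem_Icc.2 h0) h0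
  simp only [hf] at h0v
  simp at h0v
  linarith

lemma my_taylor_log {x : ℝ} (h : |x| ≤ 1 / 2) :
    |x + x ^ 2 / 2 + Real.log (1 - x)| ≤ 2 * |x| ^ 3 := by
  have h1 : |x| < 1 := lt_of_le_of_lt h (by norm_num)
  have := Real.abs_log_sub_add_sum_range_le h1 2
  simp [Finset.sum_range_succ] at this
  have h2 : (1 : ℝ) - |x| ≥ 1 / 2 := by linarith
  have h3 : |x| ^ 3 / (1 - |x|) ≤ 2 * |x| ^ 3 := by
    rw [div_le_iff₀ (by linarith)]
    nlinarith [pow_nonneg (abs_nonneg x) 3]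
  calc |x + x ^ 2 / 2 + Real.log (1 - x)| ≤ |x| ^ (2 + 1) / (1 - |x|) := by
        convert this using 2; ring
    _ ≤ 2 * |x| ^ 3 := by norm_num at h3 ⊢; exact h3


noncomputable def En (n : ℕ) (Y l : ℝ) (t : ℝ) : ℝ :=
  (n : ℝ) * Real.log (Real.sqrt n + t) - (n : ℝ) / 2 * Real.log n + (n : ℝ) / 2
    + Y * (Real.sqrt n + t)
    + (Y ^ 2 + l * Y - 1) * Real.log (1 - (Real.sqrt n + t) / Y)

lemma step1 (n : ℕ) (Y l : ℝ) (hY : 0 < Y) :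
    (∫ t : ℝ, Set.indicator (Set.Ioo (-Real.sqrt n) (Y - Real.sqrt n))
        (fun t => Real.exp (En n Y l t)) t)
    = Y ^ (n + 1) *
        (∫ x in Set.Ioo (0 : ℝ) 1,
          Real.exp (Y ^ 2 * (x + Real.log (1 - x)) + l * Y * Real.log (1 - x)) *
            x ^ n / (1 - x)) *
        Real.exp ((n : ℝ) / 2 - (n : ℝ) / 2 * Real.log n) := by
  set r : ℝ := Real.sqrt n with hrdef
  set c : ℝ := Real.exp ((n : ℝ) / 2 - (n : ℝ) / 2 * Real.log n) with hcdef
  set f : ℝ → ℝ := fun x =>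
    Real.exp (Y ^ 2 * (x + Real.log (1 - x)) + l * Y * Real.log (1 - x)) * x ^ n / (1 - x)
    with hfdef
  set G : ℝ → ℝ := Set.indicator (Set.Ioo (0 : ℝ) 1) f with hGdef
  have hr0 : 0 ≤ r := Real.sqrt_nonneg _
  have key : ∀ t : ℝ, Set.indicator (Set.Ioo (-r) (Y - r))
      (fun t => Real.exp (En n Y l t)) t = (Y ^ n * c) * G (Y⁻¹ * (t + r)) := by
    intro t
    have hxval : Y⁻¹ * (t + r) = (r + t) / Y := by
      rw [div_eq_inv_mul]; ring
    by_cases h : t ∈ Set.Ioo (-r) (Y - r)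
    · have hs0 : 0 < r + t := by have := h.1; linarith
      have hsY : r + t < Y := by have := h.2; linarith
      have hmem : Y⁻¹ * (t + r) ∈ Set.Ioo (0 : ℝ) 1 := by
        rw [hxval]
        exact ⟨div_pos hs0 hY, (div_lt_one hY).2 hsY⟩
      rw [Set.indicator_of_mem h, hGdef, Set.indicator_of_mem hmem, hxval]
      have h1x : (0 : ℝ) < 1 - (r + t) / Y := by
        rw [sub_pos]; exact (div_lt_one hY).2 hsY
      have hpow : Y ^ n * ((r + t) / Y) ^ n = (r + t) ^ n := by
        rw [← mul_pow]; congr 1; field_simp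
      have hexp1 : Real.exp ((n : ℝ) * Real.log (r + t)) = (r + t) ^ n := by
        rw [← Real.log_pow, Real.exp_log (pow_pos hs0 n)]
      have hinv : (1 - (r + t) / Y)⁻¹ = Real.exp (-Real.log (1 - (r + t) / Y)) := by
        rw [Real.exp_neg, Real.exp_log h1x]
      set L : ℝ := Real.log (1 - (r + t) / Y) with hLdef
      have : En n Y l t = (n : ℝ) * Real.log (r + t)
          + ((n : ℝ) / 2 - (n : ℝ) / 2 * Real.log n)
          + (Y ^ 2 * ((r + t) / Y + L) + l * Y * L) + (-L) := by
        simp only [En, ← hrdef, ← hLdef]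
        have : Y ^ 2 * ((r + t) / Y) = Y * (r + t) := by field_simp
        rw [show Y ^ 2 * ((r + t) / Y + L) = Y ^ 2 * ((r + t) / Y) + Y ^ 2 * L by ring, this]
        ring
      rw [this, Real.exp_add, Real.exp_add, Real.exp_add, hexp1, hfdef]
      simp only [← hcdef]
      rw [div_eq_mul_inv _ (1 - (r + t) / Y), hinv, ← hpow]
      ring
    · rw [Set.indicator_of_notMem h, hGdef, Set.indicator_of_notMem, mul_zero]
      intro hmem
      apply h
      rw [hxval] at hmem
      have h0 : 0 < r + t := by
        have h' := mul_pos hmem.1 hY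
        rwa [div_mul_cancel₀ _ (ne_of_gt hY)] at h'
      have h1 : r + t < Y := (div_lt_one hY).1 hmem.2
      exact ⟨by linarith, by linarith⟩
  calc (∫ t : ℝ, Set.indicator (Set.Ioo (-r) (Y - r)) (fun t => Real.exp (En n Y l t)) t)
      = ∫ t : ℝ, (Y ^ n * c) * G (Y⁻¹ * (t + r)) := by simp_rw [key]
    _ = (Y ^ n * c) * ∫ t : ℝ, G (Y⁻¹ * (t + r)) := integral_const_mul _ _
    _ = (Y ^ n * c) * ∫ x : ℝ, G (Y⁻¹ * x) := by
        rw [integral_add_right_eq_self (fun x => G (Y⁻¹ * x)) r]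
    _ = (Y ^ n * c) * (|Y| • ∫ x : ℝ, G x) := by
        rw [Measure.integral_comp_inv_mul_left G Y]
    _ = Y ^ (n + 1) * (∫ x in Set.Ioo (0 : ℝ) 1, f x) * c := by
        rw [smul_eq_mul, abs_of_pos hY, hGdef, integral_indicator measurableSet_Ioo]
        ring

set_option maxHeartbeats 2000000 in
/-- Laplace-type asymptotics for
`a_n(y,λ) = y^(n+1) ∫₀¹ e^(y²(x + ln(1-x)) + λ y ln(1-x)) x^n (1-x)⁻¹ dx`:
along any joint limit in which `n → ∞`, `y → ∞`, with `n^(3/2)/y → 0` and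
`λ√n → 0` (and `λ ≥ 0`), one has `a_n(y,λ) e^(n/2 - (n/2) ln n) → √π`. -/
theorem laplace_asymptotics_an (N : ℕ → ℕ) (y lam : ℕ → ℝ)
    (hy : ∀ k, 0 < y k) (hlam : ∀ k, 0 ≤ lam k)
    (hN : Tendsto (fun k => (N k : ℝ)) atTop atTop)
    (hytop : Tendsto y atTop atTop)
    (h1 : Tendsto (fun k => (N k : ℝ) ^ ((3 : ℝ) / 2) / y k) atTop (nhds 0))
    (h2 : Tendsto (fun k => lam k * Real.sqrt (N k : ℝ)) atTop (nhds 0)) :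
    Tendsto
      (fun k =>
        (y k) ^ (N k + 1) *
          (∫ x in Set.Ioo (0 : ℝ) 1,
            Real.exp ((y k) ^ 2 * (x + Real.log (1 - x)) + lam k * y k * Real.log (1 - x)) *
              x ^ (N k) / (1 - x)) *
          Real.exp ((N k : ℝ) / 2 - (N k : ℝ) / 2 * Real.log (N k : ℝ)))
      atTop (nhds (Real.sqrt π)) := by
  have hπ : (∫ t : ℝ, Real.exp (-t ^ 2)) = Real.sqrt π := by
    have h := integral_gaussian 1
    simpa using h
  refine Filter.Tendsto.congr
    (f₁ := fun k => ∫ t : ℝ, Set.indicator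
      (Set.Ioo (-Real.sqrt (N k)) (y k - Real.sqrt (N k)))
      (fun t => Real.exp (En (N k) (y k) (lam k) t)) t)
    (fun k => step1 (N k) (y k) (lam k) (hy k)) ?_
  rw [← hπ]
  have hrtop : Tendsto (fun k => Real.sqrt (N k : ℝ)) atTop atTop := by
    have h := (tendsto_rpow_atTop (show (0:ℝ) < 1/2 by norm_num)).comp hN
    exact h.congr fun k => (Real.sqrt_eq_rpow _).symm
  apply tendsto_integral_filter_of_dominated_convergence
      (bound := fun t => Real.exp (3/2) * Real.exp (-t^2/2))
  · -- measurability
    filter_upwards with k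
    refine (Measurable.indicator ?_ measurableSet_Ioo).aestronglyMeasurable
    unfold En
    have m1 : Measurable fun t : ℝ => Real.log (Real.sqrt (N k : ℝ) + t) :=
      Real.measurable_log.comp (measurable_const.add measurable_id)
    have m2 : Measurable fun t : ℝ =>
        Real.log (1 - (Real.sqrt (N k : ℝ) + t) / y k) :=
      Real.measurable_log.comp
        (measurable_const.sub ((measurable_const.add measurable_id).div_const _))
    exact Real.measurable_exp.comp
      (((((m1.const_mul ((N k : ℝ))).sub measurable_const).add measurable_const).add
        ((measurable_const.add measurable_id).const_mul (y k))).add (m2.const_mul _))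
  · -- bound
    filter_upwards [hN.eventually_ge_atTop 1, hytop.eventually_ge_atTop 1] with k hk1 hkY
    refine Filter.Eventually.of_forall fun t => ?_
    by_cases ht : t ∈ Set.Ioo (-Real.sqrt (N k : ℝ)) (y k - Real.sqrt (N k : ℝ))
    · rw [Set.indicator_of_mem ht, Real.norm_eq_abs, abs_of_pos (Real.exp_pos _),
        ← Real.exp_add]
      refine Real.exp_le_exp.2 ?_
      set r := Real.sqrt ((N k : ℕ) : ℝ) with hrdef
      have hYpos := hy k
      have hl := hlam k
      have hrr : r * r = (N k : ℝ) := Real.mul_self_sqrt (Nat.cast_nonneg _)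
      have hr0 : 0 ≤ r := Real.sqrt_nonneg _
      have hr1 : 1 ≤ r := by nlinarith
      have hrpos : 0 < r := by linarith
      have hs0 : 0 < r + t := by have := ht.1; linarith
      have hsY : r + t < y k := by have := ht.2; linarith
      have hv0 : 0 < (r + t) / y k := div_pos hs0 hYpos
      have hv1 : (r + t) / y k < 1 := (div_lt_one hYpos).2 hsY
      have hL : Real.log (1 - (r + t) / y k) ≤ -((r + t) / y k) - ((r + t) / y k) ^ 2 / 2 :=
        my_log_one_sub_le hv0.le hv1
      have hL0 : Real.log (1 - (r + t) / y k) ≤ 0 :=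
        Real.log_nonpos (by linarith) (by linarith)
      have hA : (N k : ℝ) * Real.log (r + t) - (N k : ℝ) / 2 * Real.log (N k : ℝ)
          ≤ r * (r + t) - (N k : ℝ) := by
        have hlogr : Real.log r = Real.log (N k : ℝ) / 2 := by
          rw [hrdef]; exact Real.log_sqrt (Nat.cast_nonneg _)
        have hld : Real.log ((r + t) / r) = Real.log (r + t) - Real.log r :=
          Real.log_div hs0.ne' hrpos.ne'
        have h := Real.log_le_sub_one_of_pos (div_pos hs0 hrpos)
        have h' := mul_le_mul_of_nonneg_left h (show (0:ℝ) ≤ (N k : ℝ) by linarith)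
        rw [hld] at h'
        have hq : (N k : ℝ) * ((r + t) / r - 1) = r * (r + t) - (N k : ℝ) := by
          rw [← hrr]; field_simp
        calc (N k : ℝ) * Real.log (r + t) - (N k : ℝ) / 2 * Real.log (N k : ℝ)
            = (N k : ℝ) * (Real.log (r + t) - Real.log r) := by rw [hlogr]; ring
          _ ≤ (N k : ℝ) * ((r + t) / r - 1) := h'
          _ = r * (r + t) - (N k : ℝ) := hq
      have hB : ((y k) ^ 2 + lam k * y k - 1) * Real.log (1 - (r + t) / y k)
          ≤ ((y k) ^ 2 - 1) * (-((r + t) / y k) - ((r + t) / y k) ^ 2 / 2) := by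
        have fact1 : lam k * y k * Real.log (1 - (r + t) / y k) ≤ 0 :=
          mul_nonpos_of_nonneg_of_nonpos (mul_nonneg hl hYpos.le) hL0
        have fact2 : 0 ≤ ((y k) ^ 2 - 1) *
            ((-((r + t) / y k) - ((r + t) / y k) ^ 2 / 2) - Real.log (1 - (r + t) / y k)) :=
          mul_nonneg (by nlinarith) (by linarith)
        nlinarith
      have h6 : ((y k) ^ 2 - 1) * (-((r + t) / y k) - ((r + t) / y k) ^ 2 / 2)
          = -(y k * (r + t)) - (r + t) ^ 2 / 2 + (r + t) / y k + ((r + t) / y k) ^ 2 / 2 := by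
        field_simp
        ring
      simp only [En, ← hrdef]
      nlinarith [hA, hB, h6, hrr, hv0.le, hv1, sq_nonneg ((r + t) / y k)]
    · rw [Set.indicator_of_notMem ht]
      simp only [norm_zero]
      positivity
  · -- integrable bound
    have h := (integrable_exp_neg_mul_sq (show (0:ℝ) < 1/2 by norm_num)).const_mul
      (Real.exp (3/2))
    refine h.congr (Filter.Eventually.of_forall fun t => ?_)
    have e : -(1/2 : ℝ) * t ^ 2 = -t ^ 2 / 2 := by ring
    simp only [e]
  · -- pointwise limit
    refine Filter.Eventually.of_forall fun t => ?_
    have t1 : Tendsto (fun k => 2 * |t| ^ 3 / Real.sqrt (N k : ℝ)) atTop (𝓝 0) := by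
      have h := hrtop.inv_tendsto_atTop.const_mul (2 * |t| ^ 3)
      simpa [div_eq_mul_inv] using h
    have t2 : Tendsto (fun k => 20 * ((N k : ℝ) ^ ((3:ℝ)/2) / y k)) atTop (𝓝 0) := by
      simpa using h1.const_mul (20 : ℝ)
    have t3 : Tendsto (fun k => 4 * (lam k * Real.sqrt (N k : ℝ))) atTop (𝓝 0) := by
      simpa using h2.const_mul (4 : ℝ)
    have hBd : Tendsto (fun k => 2 * |t| ^ 3 / Real.sqrt (N k : ℝ)
        + 20 * ((N k : ℝ) ^ ((3:ℝ)/2) / y k) + 4 * (lam k * Real.sqrt (N k : ℝ)))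
        atTop (𝓝 0) := by simpa using (t1.add t2).add t3
    have hev : ∀ᶠ k in atTop,
        (Set.indicator (Set.Ioo (-Real.sqrt (N k)) (y k - Real.sqrt (N k)))
          (fun t => Real.exp (En (N k) (y k) (lam k) t)) t
          = Real.exp (En (N k) (y k) (lam k) t))
        ∧ |En (N k) (y k) (lam k) t + t ^ 2|
          ≤ 2 * |t| ^ 3 / Real.sqrt (N k : ℝ) + 20 * ((N k : ℝ) ^ ((3:ℝ)/2) / y k)
            + 4 * (lam k * Real.sqrt (N k : ℝ)) := by
      filter_upwards [hN.eventually_ge_atTop 1, hrtop.eventually_ge_atTop (2*|t| + 2),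
        h1.eventually_le_const (show (0:ℝ) < 1/4 by norm_num),
        hytop.eventually_ge_atTop 1] with k hk1 hk2 hk3 hk4
      set r := Real.sqrt ((N k : ℕ) : ℝ) with hrdef
      have hYpos := hy k
      have hl := hlam k
      have hrr : r * r = (N k : ℝ) := Real.mul_self_sqrt (Nat.cast_nonneg _)
      have hr0 : 0 ≤ r := Real.sqrt_nonneg _
      have habs : 0 ≤ |t| := abs_nonneg t
      have hr1 : (1:ℝ) ≤ r := by linarith
      have hrpos : 0 < r := by linarith
      have hr3 : r ^ 3 = (N k : ℝ) ^ ((3:ℝ)/2) := by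
        rw [hrdef, Real.sqrt_eq_rpow, ← Real.rpow_natCast (((N k : ℕ) : ℝ) ^ ((1:ℝ)/2)) 3,
          ← Real.rpow_mul (Nat.cast_nonneg _)]
        norm_num
      have hs0 : 0 < r + t := by linarith [neg_abs_le t]
      have hs2r : r + t ≤ 2 * r := by linarith [le_abs_self t]
      have hrle : r ≤ (N k : ℝ) ^ ((3:ℝ)/2) := by rw [← hr3]; nlinarith
      have hrY : r / y k ≤ 1/4 := by
        have h' : r / y k ≤ (N k : ℝ) ^ ((3:ℝ)/2) / y k := by gcongr
        linarith
      have hv0 : 0 < (r + t) / y k := div_pos hs0 hYpos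
      have hv12 : (r + t) / y k ≤ 1/2 := by
        have h' : (r + t) / y k ≤ 2 * r / y k := by gcongr
        have h'' : 2 * r / y k = 2 * (r / y k) := by ring
        linarith [h'' ▸ h']
      have hsY : r + t < y k := by
        have h' := (div_le_iff₀ hYpos).1 hv12
        linarith
      have htmem : t ∈ Set.Ioo (-r) (y k - r) :=
        ⟨by linarith [neg_abs_le t], by linarith⟩
      refine ⟨Set.indicator_of_mem htmem _, ?_⟩
      have hld : Real.log ((r + t) / r) = Real.log (r + t) - Real.log r :=
        Real.log_div hs0.ne' hrpos.ne'
      have hlogr : Real.log r = Real.log (N k : ℝ) / 2 := by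
        rw [hrdef]; exact Real.log_sqrt (Nat.cast_nonneg _)
      -- Piece 1
      have hu : |(-(t / r))| ≤ 1/2 := by
        rw [abs_neg, abs_div, abs_of_pos hrpos, div_le_iff₀ hrpos]; linarith
      have hT1 := my_taylor_log hu
      have e1 : (1:ℝ) - -(t / r) = (r + t) / r := by field_simp; ring
      rw [e1, abs_neg, abs_div, abs_of_pos hrpos, neg_sq] at hT1
      have hX1eq : (N k : ℝ) * Real.log ((r + t) / r) - r * t + t ^ 2 / 2
          = (N k : ℝ) * (-(t / r) + (t / r) ^ 2 / 2 + Real.log ((r + t) / r)) := by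
        rw [← hrr]; field_simp; ring
      have hX1 : |(N k : ℝ) * Real.log ((r + t) / r) - r * t + t ^ 2 / 2|
          ≤ 2 * |t| ^ 3 / r := by
        rw [hX1eq, abs_mul, abs_of_nonneg (Nat.cast_nonneg (N k) : (0:ℝ) ≤ (N k : ℝ))]
        calc (N k : ℝ) * |(-(t / r) + (t / r) ^ 2 / 2 + Real.log ((r + t) / r))|
            ≤ (N k : ℝ) * (2 * (|t| / r) ^ 3) :=
              mul_le_mul_of_nonneg_left hT1 (Nat.cast_nonneg _)
          _ = 2 * |t| ^ 3 / r := by rw [← hrr]; field_simp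
      -- Piece 2
      have hT2 := my_taylor_log (x := (r + t) / y k) (by rw [abs_of_pos hv0]; exact hv12)
      have hX2eq : y k * (r + t) + (r + t) ^ 2 / 2
            + (y k) ^ 2 * Real.log (1 - (r + t) / y k)
          = (y k) ^ 2 * ((r + t) / y k + ((r + t) / y k) ^ 2 / 2
            + Real.log (1 - (r + t) / y k)) := by
        field_simp
      have hX2 : |y k * (r + t) + (r + t) ^ 2 / 2
            + (y k) ^ 2 * Real.log (1 - (r + t) / y k)|
          ≤ 16 * ((N k : ℝ) ^ ((3:ℝ)/2) / y k) := by
        rw [hX2eq, abs_mul, abs_of_nonneg (sq_nonneg (y k))]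
        have h' := mul_le_mul_of_nonneg_left hT2 (sq_nonneg (y k))
        rw [abs_of_pos hv0] at h'
        have he : (y k) ^ 2 * (2 * ((r + t) / y k) ^ 3) = 2 * (r + t) ^ 3 / y k := by
          field_simp
        have hcube : 2 * (r + t) ^ 3 ≤ 16 * r ^ 3 := by
          have h'' := pow_le_pow_left₀ hs0.le hs2r 3
          nlinarith [h'']
        calc (y k) ^ 2 * |(r + t) / y k + ((r + t) / y k) ^ 2 / 2
              + Real.log (1 - (r + t) / y k)|
            ≤ (y k) ^ 2 * (2 * ((r + t) / y k) ^ 3) := h'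
          _ = 2 * (r + t) ^ 3 / y k := he
          _ ≤ (16 * r ^ 3) / y k := by gcongr
          _ = 16 * ((N k : ℝ) ^ ((3:ℝ)/2) / y k) := by rw [← hr3]; ring
      -- Piece 3
      have hLabs : |Real.log (1 - (r + t) / y k)| ≤ 2 * ((r + t) / y k) := by
        have h3 := abs_add_le ((r + t) / y k + ((r + t) / y k) ^ 2 / 2
          + Real.log (1 - (r + t) / y k)) (-((r + t) / y k + ((r + t) / y k) ^ 2 / 2))
        rw [abs_neg] at h3
        have e : ((r + t) / y k + ((r + t) / y k) ^ 2 / 2 + Real.log (1 - (r + t) / y k))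
            + -((r + t) / y k + ((r + t) / y k) ^ 2 / 2) = Real.log (1 - (r + t) / y k) := by
          ring
        rw [e] at h3
        have e2 : |(r + t) / y k + ((r + t) / y k) ^ 2 / 2|
            = (r + t) / y k + ((r + t) / y k) ^ 2 / 2 := abs_of_nonneg (by positivity)
        rw [e2] at h3
        have hT2' := hT2
        rw [abs_of_pos hv0] at hT2'
        have hvsq : ((r + t) / y k) ^ 2 ≤ ((r + t) / y k) / 2 := by
          nlinarith [hv0.le, hv12]
        have hvcube : ((r + t) / y k) ^ 3 ≤ ((r + t) / y k) / 4 := by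
          nlinarith [hv0.le, hv12, hvsq]
        linarith [hT2', h3, hvsq, hvcube]
      have hX3 : |(lam k * y k - 1) * Real.log (1 - (r + t) / y k)|
          ≤ 4 * (lam k * r) + 4 * ((N k : ℝ) ^ ((3:ℝ)/2) / y k) := by
        rw [abs_mul]
        have ha : |lam k * y k - 1| ≤ lam k * y k + 1 :=
          abs_le.2 ⟨by nlinarith [mul_nonneg hl hYpos.le], by nlinarith⟩
        calc |lam k * y k - 1| * |Real.log (1 - (r + t) / y k)|
            ≤ (lam k * y k + 1) * (2 * ((r + t) / y k)) :=
              mul_le_mul ha hLabs (abs_nonneg _) (by nlinarith [mul_nonneg hl hYpos.le])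
          _ = 2 * lam k * (r + t) + 2 * ((r + t) / y k) := by field_simp
          _ ≤ 4 * (lam k * r) + 4 * (r / y k) := by
              have c1 : 2 * lam k * (r + t) ≤ 4 * (lam k * r) := by
                nlinarith [mul_le_mul_of_nonneg_left hs2r hl]
              have c2 : 2 * ((r + t) / y k) ≤ 4 * (r / y k) := by
                have h' : (r + t) / y k ≤ (2 * r) / y k := by gcongr
                have h'' : (2 * r) / y k = 2 * (r / y k) := by ring
                linarith [h'' ▸ h']
              linarith
          _ ≤ 4 * (lam k * r) + 4 * ((N k : ℝ) ^ ((3:ℝ)/2) / y k) := by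
              have h' : r / y k ≤ (N k : ℝ) ^ ((3:ℝ)/2) / y k := by gcongr
              linarith
      have hsum : En (N k) (y k) (lam k) t + t ^ 2
          = ((N k : ℝ) * Real.log ((r + t) / r) - r * t + t ^ 2 / 2)
            + (y k * (r + t) + (r + t) ^ 2 / 2
              + (y k) ^ 2 * Real.log (1 - (r + t) / y k))
            + ((lam k * y k - 1) * Real.log (1 - (r + t) / y k)) := by
        simp only [En, ← hrdef]
        rw [hld, hlogr]
        linear_combination (-1/2 : ℝ) * hrr
      rw [hsum]
      calc |((N k : ℝ) * Real.log ((r + t) / r) - r * t + t ^ 2 / 2)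
            + (y k * (r + t) + (r + t) ^ 2 / 2
              + (y k) ^ 2 * Real.log (1 - (r + t) / y k))
            + ((lam k * y k - 1) * Real.log (1 - (r + t) / y k))|
          ≤ |(N k : ℝ) * Real.log ((r + t) / r) - r * t + t ^ 2 / 2|
            + |y k * (r + t) + (r + t) ^ 2 / 2
              + (y k) ^ 2 * Real.log (1 - (r + t) / y k)|
            + |(lam k * y k - 1) * Real.log (1 - (r + t) / y k)| := abs_add_three _ _ _
        _ ≤ 2 * |t| ^ 3 / r + 20 * ((N k : ℝ) ^ ((3:ℝ)/2) / y k) + 4 * (lam k * r) := by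
            linarith [hX1, hX2, hX3]
    have hlim0 : Tendsto (fun k => En (N k) (y k) (lam k) t + t ^ 2) atTop (𝓝 0) :=
      squeeze_zero_norm' (hev.mono fun k hk => by
        simpa [Real.norm_eq_abs] using hk.2) hBd
    have hlim1 : Tendsto (fun k => En (N k) (y k) (lam k) t) atTop (𝓝 (-t ^ 2)) := by
      have h := hlim0.sub (tendsto_const_nhds : Tendsto (fun _ : ℕ => t ^ 2) atTop (𝓝 (t ^ 2)))
      simpa using h
    have hlim2 := (Real.continuous_exp.tendsto (-t ^ 2)).comp hlim1
    exact hlim2.congr' (hev.mono fun k hk => hk.1.symm)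
end
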